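/- arXiv:1011.6617 — 4 statements merged into one kernel-verified Lean document; each statement's English description precedes it below -/
import Mathlib

section
/- Let u : ℝ^n → [−1,1] be a Lipschitz continuous Q-minimizer of the energy E. Then there exists a constant C* > 0, depending only on n, Q, p, the constant C₀ in the potential bounds, and the Lipschitz constant of u, such that E_{R,x₀}(u) ≤ C* R^{n−1} for every x₀ in the closure of ℝ^n_+ and every R ≥ 1. -/
open MeasureTheory Set Metric

/-- The open half-space `{x : xₙ > 0}` of `ℝⁿ` (last coordinate positive). -/
def upperHalfSpace (n : ℕ) (hn : 0 < n) : Set (EuclideanSpace ℝ (Fin n)) :=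
  {x | 0 < x ⟨n - 1, Nat.sub_lt hn one_pos⟩}

/-- The hyperplane `{x : xₙ = 0}` of `ℝⁿ` (last coordinate zero). -/
def bottomHyperplane (n : ℕ) (hn : 0 < n) : Set (EuclideanSpace ℝ (Fin n)) :=
  {x | x ⟨n - 1, Nat.sub_lt hn one_pos⟩ = 0}

/-- The energy `E_Ω(u) = ∫_{Ω ∩ ℝⁿ₊} (|∇u|^p + F(u)) dx + ∫_{Ω ∩ {xₙ=0}} G(u) dH^{n-1}`. -/
noncomputable def energyE (n : ℕ) (hn : 0 < n) (p : ℝ) (F G : ℝ → ℝ)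
    (Ω : Set (EuclideanSpace ℝ (Fin n))) (u : EuclideanSpace ℝ (Fin n) → ℝ) : ℝ :=
  (∫ x in Ω ∩ upperHalfSpace n hn, (‖fderiv ℝ u x‖ ^ p + F (u x))) +
  (∫ x in Ω ∩ bottomHyperplane n hn, G (u x) ∂(μH[(n - 1 : ℕ)]))

/-- `u` is a `Q`-minimizer of the energy: for every bounded open `Ω` and every Lipschitz
perturbation `φ` supported in `Ω` with `u + φ` taking values in `[-1,1]`,
`E_Ω(u) ≤ Q · E_Ω(u + φ)`. -/
def IsQMinimizer (n : ℕ) (hn : 0 < n) (p Q : ℝ) (F G : ℝ → ℝ)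
    (u : EuclideanSpace ℝ (Fin n) → ℝ) : Prop :=
  ∀ Ω : Set (EuclideanSpace ℝ (Fin n)), IsOpen Ω → Bornology.IsBounded Ω →
    ∀ φ : EuclideanSpace ℝ (Fin n) → ℝ, (∃ K, LipschitzWith K φ) →
      Function.support φ ⊆ Ω → (∀ x, u x + φ x ∈ Icc (-1 : ℝ) 1) →
      energyE n hn p F G Ω u ≤ Q * energyE n hn p F G Ω (fun x => u x + φ x)

/-- The double-well potential bounds: `max(F τ, G τ) ≤ C₀ (1-τ²)^p` and
`F τ ≥ (1-τ²)^p / C₀` for `τ ∈ [-1,1]`. -/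
def PotentialBounds (p C₀ : ℝ) (F G : ℝ → ℝ) : Prop :=
  ∀ τ ∈ Icc (-1 : ℝ) 1,
    max (F τ) (G τ) ≤ C₀ * (1 - τ ^ 2) ^ p ∧ (1 - τ ^ 2) ^ p / C₀ ≤ F τ

section AuxiliaryLemmas

open scoped ENNReal NNReal

lemma aux_pow_sub (k : ℕ) {a b : ℝ} (hb : 0 ≤ b) (hba : b ≤ a) :
    a ^ (k + 1) - b ^ (k + 1) ≤ (k + 1 : ℝ) * (a - b) * a ^ k := by
  have ha : 0 ≤ a := hb.trans hba
  induction k with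
  | zero => simp
  | succ k ih =>
    have h2 : b ^ (k + 1) ≤ a ^ (k + 1) := pow_le_pow_left₀ hb hba _
    have h3 : a * (a ^ (k + 1) - b ^ (k + 1)) ≤ (k + 1 : ℝ) * (a - b) * a ^ (k + 1) :=
      le_trans (mul_le_mul_of_nonneg_left ih ha) (le_of_eq (by rw [pow_succ]; ring))
    have h4 : a ^ (k + 1 + 1) - b ^ (k + 1 + 1)
        = a * (a ^ (k + 1) - b ^ (k + 1)) + (a - b) * b ^ (k + 1) := by ring
    have h5 : (a - b) * b ^ (k + 1) ≤ (a - b) * a ^ (k + 1) :=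
      mul_le_mul_of_nonneg_left h2 (by linarith)
    push_cast
    nlinarith [h3, h4, h5]

noncomputable def CHyp (n : ℕ) : ℝ≥0∞ :=
  (((n : NNReal) ^ (2⁻¹ : ℝ) : NNReal) : ℝ≥0∞) ^ (n - 1) * ENNReal.ofReal (2 ^ (n - 1))

lemma CHyp_ne_top (n : ℕ) : CHyp n ≠ ⊤ :=
  ENNReal.mul_ne_top (ENNReal.pow_ne_top ENNReal.coe_ne_top) ENNReal.ofReal_ne_top

lemma aux_hyp_bound (n : ℕ) (hn : 0 < n) (x₀ : EuclideanSpace ℝ (Fin n)) (ρ : ℝ) (hρ : 0 ≤ ρ) :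
    μH[((n - 1 : ℕ) : ℝ)] (ball x₀ ρ ∩ bottomHyperplane n hn) ≤
      CHyp n * ENNReal.ofReal (ρ ^ (n - 1)) := by
  classical
  set m := n - 1 with hm
  set K : NNReal := (n : NNReal) ^ (2⁻¹ : ℝ) with hK
  set ι : (Fin m → ℝ) → (Fin n → ℝ) := fun y j => if h : (j : ℕ) < m then y ⟨j, h⟩ else 0 with hι_def
  have hι : LipschitzWith 1 ι := by
    intro y y'
    rw [ENNReal.coe_one, one_mul, edist_pi_def]
    apply Finset.sup_le
    intro j _
    by_cases h : (j : ℕ) < m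
    · simp only [ι, dif_pos h]
      exact edist_le_pi_edist y y' ⟨j, h⟩
    · simp only [ι, dif_neg h, edist_self]
      exact zero_le
  have hsymm : LipschitzWith K (⇑(WithLp.equiv 2 (Fin n → ℝ)).symm) := by
    intro a b
    simpa using PiLp.antilipschitzWith_ofLp 2 (fun _ : Fin n => ℝ)
      ((WithLp.equiv 2 (Fin n → ℝ)).symm a) ((WithLp.equiv 2 (Fin n → ℝ)).symm b)
  set f : (Fin m → ℝ) → EuclideanSpace ℝ (Fin n) :=
    fun y => (WithLp.equiv 2 (Fin n → ℝ)).symm (ι y) with hf_def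
  have hf : LipschitzWith (K * 1) f := hsymm.comp hι
  have hcoord : ∀ (a b : EuclideanSpace ℝ (Fin n)) (j : Fin n), dist (a j) (b j) ≤ dist a b := by
    intro a b j
    rw [EuclideanSpace.dist_eq]
    rw [show dist (a j) (b j) = Real.sqrt (dist (a j) (b j) ^ 2) from (Real.sqrt_sq dist_nonneg).symm]
    apply Real.sqrt_le_sqrt
    exact Finset.single_le_sum (f := fun i => dist (a i) (b i) ^ 2) (fun i _ => sq_nonneg _)
      (Finset.mem_univ j)
  have hmn : m ≤ n := Nat.sub_le n 1
  set y₀ : Fin m → ℝ := fun i => x₀ (Fin.castLE hmn i) with hy₀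
  have hsub : ball x₀ ρ ∩ bottomHyperplane n hn ⊆ f '' (closedBall y₀ ρ) := by
    rintro z ⟨hz1, hz2⟩
    refine ⟨fun i => z (Fin.castLE hmn i), ?_, ?_⟩
    · rw [mem_closedBall, dist_pi_le_iff hρ]
      intro b
      exact le_trans (hcoord z x₀ _) (mem_ball.mp hz1).le
    · ext j
      simp only [f]
      change ι (fun i => z (Fin.castLE hmn i)) j = z j
      by_cases h : (j : ℕ) < m
      · simp only [ι, dif_pos h]
        rfl
      · simp only [ι, dif_neg h]
        have hjlt := j.isLt
        have hj : j = ⟨n - 1, Nat.sub_lt hn one_pos⟩ := by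
          apply Fin.ext
          show (j : ℕ) = n - 1
          omega
        rw [hj]
        exact hz2.symm
  calc μH[((m : ℕ) : ℝ)] (ball x₀ ρ ∩ bottomHyperplane n hn)
      ≤ μH[((m : ℕ) : ℝ)] (f '' (closedBall y₀ ρ)) := measure_mono hsub
    _ ≤ ((K * 1 : NNReal) : ℝ≥0∞) ^ ((m : ℕ) : ℝ) * μH[((m : ℕ) : ℝ)] (closedBall y₀ ρ) :=
        hf.hausdorffMeasure_image_le (Nat.cast_nonneg m) _
    _ = (K : ℝ≥0∞) ^ m * volume (closedBall y₀ ρ) := by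
        rw [mul_one, ENNReal.rpow_natCast]
        congr 1
        rw [show ((m : ℕ) : ℝ) = ((Fintype.card (Fin m) : ℕ) : ℝ) by rw [Fintype.card_fin]]
        rw [hausdorffMeasure_pi_real]
    _ = (K : ℝ≥0∞) ^ m * ENNReal.ofReal ((2 * ρ) ^ m) := by
        rw [Real.volume_pi_closedBall _ hρ, Fintype.card_fin]
    _ = CHyp n * ENNReal.ofReal (ρ ^ m) := by
        rw [mul_pow, ENNReal.ofReal_mul (by positivity), CHyp]
        ring

lemma aux_annulus (n : ℕ) (hn : 2 ≤ n) (x₀ : EuclideanSpace ℝ (Fin n)) (R : ℝ) (hR : 1 ≤ R) :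
    volume (ball x₀ (R + 2) \ ball x₀ R) ≤
      ENNReal.ofReal (2 * n * 3 ^ (n - 1) * R ^ (n - 1)) *
        volume (ball (0 : EuclideanSpace ℝ (Fin n)) 1) := by
  haveI : Nonempty (Fin n) := ⟨⟨0, by omega⟩⟩
  haveI : Nontrivial (EuclideanSpace ℝ (Fin n)) := inferInstance
  have h0R : (0 : ℝ) ≤ R := by linarith
  rw [measure_diff (ball_subset_ball (by linarith)) measurableSet_ball.nullMeasurableSet
    measure_ball_lt_top.ne, tsub_le_iff_right]
  rw [Measure.addHaar_ball volume x₀ (by linarith : (0:ℝ) ≤ R + 2),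
      Measure.addHaar_ball volume x₀ h0R, finrank_euclideanSpace_fin]
  rw [← add_mul, ← ENNReal.ofReal_add (by positivity) (by positivity)]
  apply mul_le_mul_left
  apply ENNReal.ofReal_le_ofReal
  obtain ⟨k, rfl⟩ : ∃ k, n = k + 1 := ⟨n - 1, by omega⟩
  simp only [Nat.add_sub_cancel]
  have key := aux_pow_sub k h0R (show R ≤ R + 2 by linarith)
  have h32 : (R + 2) ^ k ≤ 3 ^ k * R ^ k := by
    rw [← mul_pow]
    exact pow_le_pow_left₀ (by linarith) (by linarith) k
  push_cast
  nlinarith [key, mul_le_mul_of_nonneg_left h32 (by positivity : (0:ℝ) ≤ 2 * ((k:ℝ) + 1))]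

end AuxiliaryLemmas

/-- If `u` is a Lipschitz continuous `Q`-minimizer of the energy, then there
is `C* > 0`, depending only on `n, Q, p, C₀` and the Lipschitz constant of `u`, with
`E_{R,x₀}(u) ≤ C* R^{n-1}` for every `x₀` in the closure of `ℝⁿ₊` and every `R ≥ 1`. -/
theorem statement0 (n : ℕ) (hn : 2 ≤ n) (p : ℝ) (hp : 1 < p) (Q : ℝ) (hQ : 1 ≤ Q)
    (C₀ : ℝ) (hC₀ : 1 ≤ C₀) (L : NNReal) :
    ∃ Cstar : ℝ, 0 < Cstar ∧
      ∀ F G : ℝ → ℝ, Continuous F → Continuous G →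
        (∀ τ, 0 ≤ F τ) → (∀ τ, 0 ≤ G τ) → PotentialBounds p C₀ F G →
        ∀ u : EuclideanSpace ℝ (Fin n) → ℝ, LipschitzWith L u →
          (∀ x, u x ∈ Icc (-1 : ℝ) 1) →
          IsQMinimizer n (by omega) p Q F G u →
          ∀ x₀ ∈ closure (upperHalfSpace n (by omega)), ∀ R : ℝ, 1 ≤ R →
            energyE n (by omega) p F G (ball x₀ R) u ≤ Cstar * R ^ (n - 1) := by
  classical
  have hn0 : 0 < n := by omega
  have hp0 : (0 : ℝ) < p := lt_trans one_pos hp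
  set v1 : ℝ := (volume (ball (0 : EuclideanSpace ℝ (Fin n)) 1)).toReal with hv1
  set cH : ℝ := (CHyp n).toReal with hcH
  set M₁ : ℝ := ((L : ℝ) + 2) ^ p + C₀ with hM₁
  have hM₁0 : 0 ≤ M₁ := by
    have := Real.rpow_nonneg (show (0:ℝ) ≤ (L:ℝ) + 2 by positivity) p
    simp only [hM₁]; linarith
  set Cbig : ℝ := Q * (M₁ * (2 * n * 3 ^ (n - 1) * v1) + C₀ * (cH * 3 ^ (n - 1))) with hCbig
  have hCbig0 : 0 ≤ Cbig := by
    have h1 : (0:ℝ) ≤ v1 := ENNReal.toReal_nonneg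
    have h2 : (0:ℝ) ≤ cH := ENNReal.toReal_nonneg
    have h3 : (0:ℝ) ≤ (3:ℝ) ^ (n-1) := by positivity
    have h4 : (0:ℝ) ≤ (n:ℝ) := Nat.cast_nonneg n
    have h5 : (0:ℝ) ≤ C₀ := by linarith
    have h6 : (0:ℝ) ≤ Q := by linarith
    simp only [hCbig]
    positivity
  refine ⟨Cbig + 1, by linarith, ?_⟩
  intro F G hFc hGc hF0 hG0 hPB u huL hu1 hmin x₀ _ R hR
  have hRpos : (0 : ℝ) < R := lt_of_lt_of_le one_pos hR
  -- basic facts about the sets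
  have hctsi : Continuous (fun x : EuclideanSpace ℝ (Fin n) => x ⟨n - 1, Nat.sub_lt hn0 one_pos⟩) :=
    (continuous_apply _).comp (PiLp.lipschitzWith_ofLp 2 (fun _ : Fin n => ℝ)).continuous
  have hHmeas : MeasurableSet (upperHalfSpace n hn0) :=
    (isOpen_lt continuous_const hctsi).measurableSet
  have hBmeas : MeasurableSet (bottomHyperplane n hn0) :=
    (isClosed_eq hctsi continuous_const).measurableSet
  -- potential facts
  have hsq : ∀ τ : ℝ, τ ∈ Icc (-1:ℝ) 1 → 0 ≤ 1 - τ ^ 2 ∧ 1 - τ ^ 2 ≤ 1 := by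
    intro τ hτ
    constructor <;> nlinarith [hτ.1, hτ.2]
  have hpot1 : ∀ τ ∈ Icc (-1:ℝ) 1, (1 - τ ^ 2) ^ p ≤ 1 := fun τ hτ =>
    Real.rpow_le_one (hsq τ hτ).1 (hsq τ hτ).2 hp0.le
  have hF_le : ∀ τ ∈ Icc (-1:ℝ) 1, F τ ≤ C₀ := by
    intro τ hτ
    calc F τ ≤ max (F τ) (G τ) := le_max_left _ _
      _ ≤ C₀ * (1 - τ ^ 2) ^ p := (hPB τ hτ).1
      _ ≤ C₀ * 1 := mul_le_mul_of_nonneg_left (hpot1 τ hτ) (by linarith)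
      _ = C₀ := mul_one _
  have hG_le : ∀ τ ∈ Icc (-1:ℝ) 1, G τ ≤ C₀ := by
    intro τ hτ
    calc G τ ≤ max (F τ) (G τ) := le_max_right _ _
      _ ≤ C₀ * (1 - τ ^ 2) ^ p := (hPB τ hτ).1
      _ ≤ C₀ * 1 := mul_le_mul_of_nonneg_left (hpot1 τ hτ) (by linarith)
      _ = C₀ := mul_one _
  have hFm1 : F (-1) = 0 := by
    have h := (hPB (-1) (by norm_num)).1
    have h0 : ((1 : ℝ) - (-1 : ℝ) ^ 2) = 0 := by norm_num
    rw [h0, Real.zero_rpow hp0.ne', mul_zero] at h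
    exact le_antisymm (le_trans (le_max_left _ _) h) (hF0 _)
  -- the competitor
  set t : EuclideanSpace ℝ (Fin n) → ℝ := fun x => ((dist x₀ x - R) ⊔ 0) ⊓ 1 with ht_def
  have htLip : LipschitzWith ((1 + 0 : NNReal)) t :=
    (((LipschitzWith.dist_right x₀).sub (LipschitzWith.const R)).max_const 0).min_const 1
  set w : EuclideanSpace ℝ (Fin n) → ℝ := fun x => (u x - 2) + (t x + t x) with hw_def
  have hwLip : LipschitzWith ((L + 0) + ((1 + 0) + (1 + 0))) w :=
    (huL.sub (LipschitzWith.const 2)).add (htLip.add htLip)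
  set v : EuclideanSpace ℝ (Fin n) → ℝ := fun x => w x ⊔ (-1) with hv_def
  have hvLip : LipschitzWith ((L + 0) + ((1 + 0) + (1 + 0))) v := hwLip.max_const (-1)
  have hKv : (((L + 0) + ((1 + 0) + (1 + 0)) : NNReal) : ℝ) = (L : ℝ) + 2 := by
    push_cast; ring
  have ht0 : ∀ x, 0 ≤ t x := fun x => le_inf le_sup_right zero_le_one
  have ht1 : ∀ x, t x ≤ 1 := fun x => inf_le_right
  have hv_ball : ∀ x ∈ ball x₀ R, v x = -1 := by
    intro x hx
    have hd : dist x₀ x < R := by rw [dist_comm]; exact mem_ball.mp hx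
    have htx : t x = 0 := by
      simp only [ht_def]
      rw [sup_eq_right.mpr (by linarith : dist x₀ x - R ≤ 0)]
      exact inf_eq_left.mpr zero_le_one
    have hu2 := (hu1 x).2
    simp only [hv_def, hw_def, htx]
    rw [sup_eq_right.mpr (by linarith : u x - 2 + (0 + 0) ≤ -1)]
  have hv_out : ∀ x, R + 1 ≤ dist x₀ x → v x = u x := by
    intro x hx
    have htx : t x = 1 := by
      simp only [ht_def]
      rw [sup_eq_left.mpr (by linarith : (0:ℝ) ≤ dist x₀ x - R)]
      exact inf_eq_right.mpr (by linarith)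
    have hw : w x = u x := by simp only [hw_def, htx]; ring
    simp only [hv_def, hw]
    exact sup_eq_left.mpr (hu1 x).1
  have hv_mem : ∀ x, v x ∈ Icc (-1:ℝ) 1 := by
    intro x
    refine ⟨le_sup_right, sup_le ?_ (by norm_num)⟩
    have := (hu1 x).2
    have := ht1 x
    simp only [hw_def]
    linarith [ht1 x]
  set φ : EuclideanSpace ℝ (Fin n) → ℝ := fun x => v x - u x with hφ_def
  have hφLip : LipschitzWith (((L + 0) + ((1 + 0) + (1 + 0))) + L) φ := hvLip.sub huL
  have hsupp : Function.support φ ⊆ ball x₀ (R + 2) := by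
    intro x hx
    rw [Function.mem_support] at hx
    by_contra hmem
    apply hx
    have hd : R + 1 ≤ dist x₀ x := by
      rw [mem_ball, dist_comm] at hmem
      push_neg at hmem
      linarith
    simp only [hφ_def, hv_out x hd, sub_self]
  have huφ : (fun x => u x + φ x) = v := by
    funext x; simp only [hφ_def]; ring
  have hmin' := hmin (ball x₀ (R + 2)) isOpen_ball isBounded_ball φ ⟨_, hφLip⟩ hsupp
    (fun x => by
      have hx : u x + φ x = v x := by simp only [hφ_def]; ring
      rw [hx]; exact hv_mem x)
  rw [huφ] at hmin'
  -- measure bounds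
  have hμs₁ : volume (ball x₀ (R + 2) ∩ upperHalfSpace n hn0) ≠ ⊤ :=
    (lt_of_le_of_lt (measure_mono inter_subset_left) measure_ball_lt_top).ne
  have hμHb := aux_hyp_bound n hn0 x₀ (R + 2) (by linarith)
  have hμHb3 : μH[((n - 1 : ℕ) : ℝ)] (ball x₀ (R + 2) ∩ bottomHyperplane n hn0) ≤
      CHyp n * ENNReal.ofReal ((3 * R) ^ (n - 1)) := by
    refine le_trans hμHb (mul_le_mul_right (ENNReal.ofReal_le_ofReal ?_) _)
    exact pow_le_pow_left₀ (by linarith) (by linarith) _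
  have hCHR_ne : CHyp n * ENNReal.ofReal ((3 * R) ^ (n - 1)) ≠ ⊤ :=
    ENNReal.mul_ne_top (CHyp_ne_top n) ENNReal.ofReal_ne_top
  have hμs₂ : μH[((n - 1 : ℕ) : ℝ)] (ball x₀ (R + 2) ∩ bottomHyperplane n hn0) < ⊤ :=
    lt_of_le_of_lt hμHb3 (lt_top_iff_ne_top.mpr hCHR_ne)
  -- integrands: measurability and bounds
  have hmg : ∀ q : EuclideanSpace ℝ (Fin n) → ℝ, Continuous q →
      Measurable fun x => ‖fderiv ℝ q x‖ ^ p + F (q x) := by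
    intro q hq
    exact (((Real.continuous_rpow_const hp0.le).measurable).comp
      (measurable_fderiv ℝ q).norm).add ((hFc.measurable).comp hq.measurable)
  have hgb : ∀ (q : EuclideanSpace ℝ (Fin n) → ℝ) (Kq : NNReal), LipschitzWith Kq q →
      (∀ x, q x ∈ Icc (-1:ℝ) 1) → ((Kq : ℝ) ≤ (L : ℝ) + 2) →
      ∀ x, 0 ≤ ‖fderiv ℝ q x‖ ^ p + F (q x) ∧ ‖fderiv ℝ q x‖ ^ p + F (q x) ≤ M₁ := by
    intro q Kq hqL hq1 hKq x
    have h1 : 0 ≤ ‖fderiv ℝ q x‖ ^ p := Real.rpow_nonneg (norm_nonneg _) p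
    have h2 : ‖fderiv ℝ q x‖ ^ p ≤ ((L : ℝ) + 2) ^ p := by
      apply Real.rpow_le_rpow (norm_nonneg _) _ hp0.le
      exact le_trans (norm_fderiv_le_of_lipschitz ℝ hqL) hKq
    have h3 := hF_le (q x) (hq1 x)
    have h4 := hF0 (q x)
    exact ⟨by linarith, by simp only [hM₁]; linarith⟩
  have hgbu := hgb u L huL hu1 (by push_cast; linarith)
  have hgbv := hgb v _ hvLip hv_mem (le_of_eq hKv)
  -- integrability
  have hIntU : IntegrableOn (fun x => ‖fderiv ℝ u x‖ ^ p + F (u x))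
      (ball x₀ (R + 2) ∩ upperHalfSpace n hn0) volume := by
    apply Measure.integrableOn_of_bounded (M := M₁) hμs₁ ((hmg u huL.continuous).aestronglyMeasurable)
    apply ae_of_all
    intro x
    show ‖‖fderiv ℝ u x‖ ^ p + F (u x)‖ ≤ M₁
    rw [Real.norm_of_nonneg (hgbu x).1]; exact (hgbu x).2
  have hIntV : IntegrableOn (fun x => ‖fderiv ℝ v x‖ ^ p + F (v x))
      (ball x₀ (R + 2) ∩ upperHalfSpace n hn0) volume := by
    apply Measure.integrableOn_of_bounded (M := M₁) hμs₁ ((hmg v hvLip.continuous).aestronglyMeasurable)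
    apply ae_of_all
    intro x
    show ‖‖fderiv ℝ v x‖ ^ p + F (v x)‖ ≤ M₁
    rw [Real.norm_of_nonneg (hgbv x).1]; exact (hgbv x).2
  have hIntGu : IntegrableOn (fun x => G (u x))
      (ball x₀ (R + 2) ∩ bottomHyperplane n hn0) (μH[((n - 1 : ℕ) : ℝ)]) := by
    apply Measure.integrableOn_of_bounded (M := C₀) hμs₂.ne
      ((hGc.comp huL.continuous).aestronglyMeasurable)
    apply ae_of_all
    intro x
    show ‖G (u x)‖ ≤ C₀
    rw [Real.norm_of_nonneg (hG0 _)]; exact hG_le _ (hu1 x)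
  have hIntGv : IntegrableOn (fun x => G (v x))
      (ball x₀ (R + 2) ∩ bottomHyperplane n hn0) (μH[((n - 1 : ℕ) : ℝ)]) := by
    apply Measure.integrableOn_of_bounded (M := C₀) hμs₂.ne
      ((hGc.comp hvLip.continuous).aestronglyMeasurable)
    apply ae_of_all
    intro x
    show ‖G (v x)‖ ≤ C₀
    rw [Real.norm_of_nonneg (hG0 _)]; exact hG_le _ (hv_mem x)
  -- step 1 : monotonicity in Ω
  have step1 : energyE n hn0 p F G (ball x₀ R) u ≤ energyE n hn0 p F G (ball x₀ (R + 2)) u := by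
    unfold energyE
    apply add_le_add
    · apply setIntegral_mono_set hIntU (ae_of_all _ fun x => (hgbu x).1)
      exact (inter_subset_inter_left _ (ball_subset_ball (by linarith))).eventuallyLE
    · apply setIntegral_mono_set hIntGu (ae_of_all _ fun x => hG0 _)
      exact (inter_subset_inter_left _ (ball_subset_ball (by linarith))).eventuallyLE
  -- step 2 : bound the energy of the competitor
  have hI₁ : (∫ x in ball x₀ (R + 2) ∩ upperHalfSpace n hn0, (‖fderiv ℝ v x‖ ^ p + F (v x)))
      ≤ M₁ * (2 * n * 3 ^ (n - 1) * R ^ (n - 1) * v1) := by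
    have hsplit := integral_inter_add_diff (s := ball x₀ (R + 2) ∩ upperHalfSpace n hn0)
      (t := ball x₀ R) (μ := volume) measurableSet_ball hIntV
    rw [← hsplit]
    have hzero : (∫ x in (ball x₀ (R + 2) ∩ upperHalfSpace n hn0) ∩ ball x₀ R,
        (‖fderiv ℝ v x‖ ^ p + F (v x))) = 0 := by
      apply setIntegral_eq_zero_of_forall_eq_zero
      intro x hx
      have hev : v =ᶠ[nhds x] (fun _ => (-1 : ℝ)) := by
        filter_upwards [isOpen_ball.mem_nhds hx.2] with y hy
        exact hv_ball y hy
      have hfd : fderiv ℝ v x = 0 := by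
        rw [hev.fderiv_eq]; exact fderiv_const_apply _
      rw [hfd, hv_ball x hx.2, norm_zero, Real.zero_rpow hp0.ne', hFm1, add_zero]
    rw [hzero, zero_add]
    have hdiffmeas : MeasurableSet ((ball x₀ (R + 2) ∩ upperHalfSpace n hn0) \ ball x₀ R) :=
      (measurableSet_ball.inter hHmeas).diff measurableSet_ball
    have hμdiff : volume ((ball x₀ (R + 2) ∩ upperHalfSpace n hn0) \ ball x₀ R) ≤
        ENNReal.ofReal (2 * n * 3 ^ (n - 1) * R ^ (n - 1)) *
          volume (ball (0 : EuclideanSpace ℝ (Fin n)) 1) :=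
      le_trans (measure_mono (diff_subset_diff_left inter_subset_left)) (aux_annulus n hn x₀ R hR)
    have hμdiff_ne : ENNReal.ofReal (2 * n * 3 ^ (n - 1) * R ^ (n - 1)) *
        volume (ball (0 : EuclideanSpace ℝ (Fin n)) 1) ≠ ⊤ :=
      ENNReal.mul_ne_top ENNReal.ofReal_ne_top measure_ball_lt_top.ne
    calc (∫ x in (ball x₀ (R + 2) ∩ upperHalfSpace n hn0) \ ball x₀ R,
          (‖fderiv ℝ v x‖ ^ p + F (v x)))
        ≤ ∫ _x in (ball x₀ (R + 2) ∩ upperHalfSpace n hn0) \ ball x₀ R, M₁ := by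
          apply setIntegral_mono_on (hIntV.mono_set diff_subset)
            (integrableOn_const (lt_of_le_of_lt (measure_mono diff_subset)
              (lt_of_le_of_lt (measure_mono inter_subset_left) measure_ball_lt_top)).ne)
            hdiffmeas
          intro x _
          exact (hgbv x).2
      _ = (volume ((ball x₀ (R + 2) ∩ upperHalfSpace n hn0) \ ball x₀ R)).toReal * M₁ := by
          rw [setIntegral_const, smul_eq_mul, measureReal_def]
      _ ≤ (2 * n * 3 ^ (n - 1) * R ^ (n - 1) * v1) * M₁ := by
          apply mul_le_mul_of_nonneg_right _ hM₁0
          have := ENNReal.toReal_mono hμdiff_ne hμdiff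
          rwa [ENNReal.toReal_mul, ENNReal.toReal_ofReal (by positivity)] at this
      _ = M₁ * (2 * n * 3 ^ (n - 1) * R ^ (n - 1) * v1) := mul_comm _ _
  have hI₂ : (∫ x in ball x₀ (R + 2) ∩ bottomHyperplane n hn0, G (v x) ∂(μH[(n - 1 : ℕ)]))
      ≤ C₀ * (cH * (3 ^ (n - 1) * R ^ (n - 1))) := by
    calc (∫ x in ball x₀ (R + 2) ∩ bottomHyperplane n hn0, G (v x) ∂(μH[(n - 1 : ℕ)]))
        ≤ ∫ _x in ball x₀ (R + 2) ∩ bottomHyperplane n hn0, C₀ ∂(μH[(n - 1 : ℕ)]) := by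
          apply setIntegral_mono_on hIntGv (integrableOn_const hμs₂.ne)
            (measurableSet_ball.inter hBmeas)
          intro x _
          exact hG_le _ (hv_mem x)
      _ = (μH[((n - 1 : ℕ) : ℝ)] (ball x₀ (R + 2) ∩ bottomHyperplane n hn0)).toReal * C₀ := by
          rw [setIntegral_const, smul_eq_mul, measureReal_def]
      _ ≤ (cH * (3 ^ (n - 1) * R ^ (n - 1))) * C₀ := by
          apply mul_le_mul_of_nonneg_right _ (by linarith : (0:ℝ) ≤ C₀)
          have := ENNReal.toReal_mono hCHR_ne hμHb3
          rwa [ENNReal.toReal_mul, ENNReal.toReal_ofReal (by positivity), mul_pow] at this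
      _ = C₀ * (cH * (3 ^ (n - 1) * R ^ (n - 1))) := mul_comm _ _
  have step2 : energyE n hn0 p F G (ball x₀ (R + 2)) v ≤
      M₁ * (2 * n * 3 ^ (n - 1) * R ^ (n - 1) * v1) + C₀ * (cH * (3 ^ (n - 1) * R ^ (n - 1))) := by
    unfold energyE
    exact add_le_add hI₁ hI₂
  have hQ0 : (0:ℝ) ≤ Q := by linarith
  calc energyE n hn0 p F G (ball x₀ R) u
      ≤ energyE n hn0 p F G (ball x₀ (R + 2)) u := step1
    _ ≤ Q * energyE n hn0 p F G (ball x₀ (R + 2)) v := hmin'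
    _ ≤ Q * (M₁ * (2 * n * 3 ^ (n - 1) * R ^ (n - 1) * v1) +
          C₀ * (cH * (3 ^ (n - 1) * R ^ (n - 1)))) := mul_le_mul_of_nonneg_left step2 hQ0
    _ = Cbig * R ^ (n - 1) := by simp only [hCbig]; ring
    _ ≤ (Cbig + 1) * R ^ (n - 1) := by
        apply mul_le_mul_of_nonneg_right (by linarith) (by positivity)
end

section
/- For every integer n ≥ 2 there exists a constant C = C(n) > 0 such that the following holds: for all Lipschitz functions u, v : ℝ^n → ℝ and every τ ∈ ℝ for which the set E := {x ∈ ℝ^n : u(x) > τ > v(x)} is bounded, one has L^n(E)^{(n−1)/n} ≤ C ( H^{n−1}({x : u(x) ≥ v(x)} ∩ {x : u(x) = τ}) + H^{n−1}({x : u(x) ≥ v(x)} ∩ {x : v(x) = τ}) ). -/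
noncomputable section
open scoped Classical
open MeasureTheory Set Function EMetric
open scoped ENNReal NNReal

/-- In a bounded open subset of `ℝⁿ` (sup metric), from any point of the set, the
coordinate line in direction `i` meets the frontier. -/
lemma line_hits_frontier {n : ℕ} {E' : Set (Fin n → ℝ)} (hE : IsOpen E')
    (hb : Bornology.IsBounded E') {y : Fin n → ℝ} (hy : y ∈ E') (i : Fin n) :
    ∃ t : ℝ, Function.update y i t ∈ frontier E' := by
  set g : ℝ → (Fin n → ℝ) := fun t => Function.update y i t with hg
  have hgc : Continuous g := continuous_const.update i continuous_id
  set A : Set ℝ := g ⁻¹' E' with hA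
  have hAopen : IsOpen A := hE.preimage hgc
  have hyA : y i ∈ A := by
    simp only [hA, mem_preimage, hg, Function.update_eq_self]; exact hy
  obtain ⟨R, hR⟩ := isBounded_iff_forall_norm_le.mp hb
  have hbdd : BddAbove A := by
    refine ⟨R, fun t ht => ?_⟩
    have h1 : ‖g t i‖ ≤ ‖g t‖ := norm_le_pi_norm (g t) i
    have h2 : g t i = t := Function.update_self i t y
    have := hR (g t) ht
    rw [h2] at h1
    exact le_trans (le_trans (le_abs_self t) h1) this
  set T := sSup A with hT
  have hTc : T ∈ closure A := csSup_mem_closure ⟨y i, hyA⟩ hbdd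
  have hTE : g T ∈ closure E' :=
    (hgc.closure_preimage_subset E') hTc
  have hTA : T ∉ A := by
    intro h
    obtain ⟨ε, hε, hball⟩ := Metric.isOpen_iff.mp hAopen T h
    have : T + ε / 2 ∈ A := hball (by simp [Real.dist_eq]; rw [abs_of_pos (by linarith)]; linarith)
    have := le_csSup hbdd this
    linarith
  exact ⟨T, by rw [hE.frontier_eq]; exact ⟨hTE, hTA⟩⟩

/-- Extract a cover from the Hausdorff measure. -/
lemma exists_hausdorff_cover {X : Type*} [EMetricSpace X] [MeasurableSpace X] [BorelSpace X]
    {d : ℝ} (hd : 0 < d) (S : Set X) {ε : ℝ≥0∞} (hε : 0 < ε) (hS : μH[d] S ≠ ⊤) :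
    ∃ t : ℕ → Set X, S ⊆ ⋃ k, t k ∧ ∑' k, EMetric.diam (t k) ^ d ≤ μH[d] S + ε := by
  have h1 : (⨅ (t : ℕ → Set X) (_ : S ⊆ ⋃ k, t k) (_ : ∀ k, diam (t k) ≤ 1),
      ∑' k, ⨆ _ : (t k).Nonempty, diam (t k) ^ d) ≤ μH[d] S := by
    rw [Measure.hausdorffMeasure_apply]
    exact le_iSup₂ (f := fun (r : ℝ≥0∞) (_ : 0 < r) =>
      ⨅ (t : ℕ → Set X) (_ : S ⊆ ⋃ k, t k) (_ : ∀ k, diam (t k) ≤ r),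
        ∑' k, ⨆ _ : (t k).Nonempty, diam (t k) ^ d) 1 zero_lt_one
  have h2 := h1.trans_lt (ENNReal.lt_add_right hS hε.ne')
  simp only [iInf_lt_iff] at h2
  obtain ⟨t, ht1, -, ht3⟩ := h2
  refine ⟨t, ht1, le_trans (le_of_eq ?_) ht3.le⟩
  refine tsum_congr fun k => ?_
  rcases eq_empty_or_nonempty (t k) with h | h
  · simp [h, ENNReal.zero_rpow_of_pos hd, hd, EMetric.diam, Metric.ediam_empty]
  · simp [h]

/-- Small constant with `ofReal c ^ d ≤ δ`. -/
lemma exists_small_c {d : ℝ} (hd : 0 < d) {δ : ℝ≥0∞} (hδ : 0 < δ) (hδ' : δ ≠ ⊤) :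
    ∃ c : ℝ, 0 < c ∧ c ≤ 1 ∧ ENNReal.ofReal c ^ d ≤ δ := by
  by_cases h : 1 ≤ δ
  · exact ⟨1, one_pos, le_rfl, by simpa using h⟩
  push_neg at h
  refine ⟨min 1 (δ.toReal ^ (1 / d)), ?_, min_le_left _ _, ?_⟩
  · have : 0 < δ.toReal := ENNReal.toReal_pos hδ.ne' hδ'
    positivity
  · have h0 : 0 < δ.toReal := ENNReal.toReal_pos hδ.ne' hδ'
    calc ENNReal.ofReal (min 1 (δ.toReal ^ (1 / d))) ^ d
        ≤ ENNReal.ofReal (δ.toReal ^ (1 / d)) ^ d := by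
          gcongr
          · exact min_le_right _ _
      _ = ENNReal.ofReal ((δ.toReal ^ (1 / d)) ^ d) := by
          rw [← ENNReal.ofReal_rpow_of_nonneg (by positivity) hd.le]
      _ = δ := by
          rw [← Real.rpow_mul h0.le, one_div, inv_mul_cancel₀ hd.ne', Real.rpow_one,
            ENNReal.ofReal_toReal hδ']

lemma iso_core {n : ℕ} (hn : 2 ≤ n) (E : Set (EuclideanSpace ℝ (Fin n)))
    (hE : IsOpen E) (hb : Bornology.IsBounded E) :
    volume E ^ (((n : ℝ) - 1) / n) ≤
      (4 : ℝ≥0∞) ^ ((n : ℝ) - 1) * μH[(n : ℝ) - 1] (frontier E) := by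
  have hd1 : (1 : ℝ) ≤ (n : ℝ) - 1 := by
    have : (2 : ℝ) ≤ n := by exact_mod_cast hn
    linarith
  have hd : (0 : ℝ) < (n : ℝ) - 1 := lt_of_lt_of_le one_pos hd1
  set d : ℝ := (n : ℝ) - 1 with hdd
  set M := μH[d] (frontier E) with hM
  set P : ℝ≥0∞ := (4 : ℝ≥0∞) ^ d with hP
  have hP0 : P ≠ 0 := (ENNReal.rpow_pos (by norm_num) (by norm_num)).ne'
  have hPtop : P ≠ ⊤ := ENNReal.rpow_ne_top_of_nonneg hd.le (by norm_num)
  by_cases hMtop : M = ⊤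
  · rw [hMtop, ENNReal.mul_top hP0]; exact le_top
  refine ENNReal.le_of_forall_pos_le_add fun ε hε hfin => ?_
  -- auxiliary positive quantities
  have hε' : ((ε : ℝ≥0∞)) ≠ 0 := by exact_mod_cast hε.ne'
  set ε₁ : ℝ≥0∞ := (ε : ℝ≥0∞) / 2 * P⁻¹ with hε₁
  have hε₁pos : 0 < ε₁ := by
    apply ENNReal.mul_pos
    · exact fun h => absurd (by simpa [ENNReal.div_eq_zero_iff] using h) hε'
    · exact (ENNReal.inv_ne_zero.mpr hPtop)
  have hε₁top : ε₁ ≠ ⊤ := by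
    apply ENNReal.mul_ne_top
    · exact (ENNReal.div_lt_top ENNReal.coe_ne_top (by norm_num)).ne
    · simp [hP0]
  set δ : ℝ≥0∞ := (ε : ℝ≥0∞) / 2 * (P * 2)⁻¹ with hδ
  have hδpos : 0 < δ := by
    apply ENNReal.mul_pos
    · exact fun h => absurd (by simpa [ENNReal.div_eq_zero_iff] using h) hε'
    · exact ENNReal.inv_ne_zero.mpr (ENNReal.mul_ne_top hPtop (by norm_num))
  have hδtop : δ ≠ ⊤ := by
    apply ENNReal.mul_ne_top
    · exact (ENNReal.div_lt_top ENNReal.coe_ne_top (by norm_num)).ne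
    · simp [hP0]
  obtain ⟨t, hcov, hsum⟩ := exists_hausdorff_cover hd (frontier E) hε₁pos hMtop
  obtain ⟨c, hc0, hc1, hcd⟩ := exists_small_c hd hδpos hδtop
  have hfink : ∀ k, diam (t k) ≠ ⊤ := by
    intro k hcon
    have h1 : diam (t k) ^ d ≤ ∑' k, diam (t k) ^ d := ENNReal.le_tsum k
    rw [hcon, ENNReal.top_rpow_of_pos hd] at h1
    have h2 : (⊤ : ℝ≥0∞) ≤ M + ε₁ := h1.trans hsum
    exact (ENNReal.add_ne_top.mpr ⟨hMtop, hε₁top⟩) (top_le_iff.mp h2)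
  -- transfer to the product space `Fin n → ℝ`
  set toE : (Fin n → ℝ) ≃ EuclideanSpace ℝ (Fin n) := (WithLp.equiv 2 (Fin n → ℝ)).symm with htoE
  have hcont : Continuous ⇑toE := PiLp.continuous_toLp 2 (fun _ : Fin n => ℝ)
  set E' : Set (Fin n → ℝ) := ⇑toE ⁻¹' E with hE'
  have hE'open : IsOpen E' := hE.preimage hcont
  have hvol : volume E' = volume E := by
    have h := ((EuclideanSpace.volume_preserving_symm_measurableEquiv_toLp (Fin n)).symm).measure_preimage
      (hE.measurableSet.nullMeasurableSet)
    rw [← h]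
    congr 1
  have hE'b : Bornology.IsBounded E' := by
    obtain ⟨R, hR⟩ := Metric.isBounded_iff.mp hb
    apply Metric.isBounded_iff.mpr
    refine ⟨R, fun w1 hw1 w2 hw2 => ?_⟩
    have h1 : dist ((WithLp.equiv 2 (Fin n → ℝ)) (toE w1)) ((WithLp.equiv 2 (Fin n → ℝ)) (toE w2))
        ≤ 1 * dist (toE w1) (toE w2) :=
      (PiLp.lipschitzWith_ofLp 2 (fun _ : Fin n => ℝ)).dist_le_mul _ _
    rw [Equiv.apply_symm_apply, Equiv.apply_symm_apply, one_mul] at h1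
    exact h1.trans (hR hw1 hw2)
  set t' : ℕ → Set (Fin n → ℝ) := fun k => ⇑toE ⁻¹' (t k) with ht'
  have hfrontier : frontier E' ⊆ ⋃ k, t' k := by
    have h1 : frontier E' ⊆ ⇑toE ⁻¹' frontier E := by
      rw [hE'open.frontier_eq, hE.frontier_eq]
      intro w hw
      exact ⟨hcont.closure_preimage_subset E hw.1, hw.2⟩
    refine h1.trans ?_
    rw [← preimage_iUnion]
    exact preimage_mono hcov
  -- centers and cubes
  set z : ℕ → (Fin n → ℝ) := fun k => if h : (t' k).Nonempty then h.some else 0 with hz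
  have hzmem : ∀ k, (t' k).Nonempty → z k ∈ t' k := by
    intro k h
    simp only [hz, dif_pos h]
    exact h.some_mem
  set r : ℕ → ℝ := fun k => (diam (t k)).toReal + c * (1 / 2) ^ k with hrdef
  have hr : ∀ k, 0 < r k := by
    intro k
    have : (0:ℝ) ≤ (diam (t k)).toReal := ENNReal.toReal_nonneg
    have h2 : (0:ℝ) < c * (1 / 2) ^ k := by positivity
    simp only [hrdef]; linarith
  have hrd : ∀ k, (diam (t k)).toReal ≤ r k := by
    intro k
    have h2 : (0:ℝ) ≤ c * (1 / 2) ^ k := by positivity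
    simp only [hrdef]; linarith
  set Q : ℕ → Set (Fin n → ℝ) := fun k => univ.pi fun j => Icc (z k j - r k) (z k j + r k)
    with hQ
  have hQm : ∀ k, MeasurableSet (Q k) := fun k =>
    MeasurableSet.univ_pi fun j => measurableSet_Icc
  have hQsub : ∀ k, t' k ⊆ Q k := by
    intro k w hw
    have hne : (t' k).Nonempty := ⟨w, hw⟩
    have hz' := hzmem k hne
    have hdist : dist w (z k) ≤ (diam (t k)).toReal := by
      have h1 : edist (toE w) (toE (z k)) ≤ diam (t k) :=
        edist_le_diam_of_mem hw hz'
      have h2 : dist (toE w) (toE (z k)) ≤ (diam (t k)).toReal := by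
        rw [dist_edist]
        exact ENNReal.toReal_mono (hfink k) h1
      have h3 : dist ((WithLp.equiv 2 (Fin n → ℝ)) (toE w)) ((WithLp.equiv 2 (Fin n → ℝ)) (toE (z k)))
          ≤ 1 * dist (toE w) (toE (z k)) :=
        (PiLp.lipschitzWith_ofLp 2 (fun _ : Fin n => ℝ)).dist_le_mul _ _
      rw [Equiv.apply_symm_apply, Equiv.apply_symm_apply, one_mul] at h3
      exact h3.trans h2
    refine Set.mem_pi.mpr fun j _ => ?_
    have h4 : dist (w j) (z k j) ≤ dist w (z k) := dist_le_pi_dist w (z k) j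
    have h5 : |w j - z k j| ≤ r k := by
      rw [← Real.dist_eq]
      exact h4.trans (hdist.trans (hrd k))
    have h6 := abs_le.mp h5
    constructor <;> [linarith [h6.1]; linarith [h6.2]]
  -- the comparison function
  set coef : ℕ → ℝ≥0∞ := fun k => (ENNReal.ofReal (2 * r k))⁻¹ with hcoef
  have h2r0 : ∀ k, ENNReal.ofReal (2 * r k) ≠ 0 := by
    intro k
    exact (ENNReal.ofReal_pos.mpr (by have := hr k; linarith)).ne'
  have h2rt : ∀ k, ENNReal.ofReal (2 * r k) ≠ ⊤ := fun k => ENNReal.ofReal_ne_top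
  set F : (Fin n → ℝ) → ℝ≥0∞ := fun y => ∑' k, (Q k).indicator (fun _ => coef k) y with hF
  have hFmeas : Measurable F :=
    Measurable.ennreal_tsum fun k => measurable_const.indicator (hQm k)
  -- key pointwise estimate
  have key : ∀ y ∈ E', ∀ i : Fin n, (1 : ℝ≥0∞) ≤ ∫⁻ s, F (Function.update y i s) := by
    intro y hy i
    obtain ⟨t₀, ht₀⟩ := line_hits_frontier hE'open hE'b hy i
    obtain ⟨k, hk⟩ : ∃ k, Function.update y i t₀ ∈ t' k := mem_iUnion.mp (hfrontier ht₀)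
    have hQk : Function.update y i t₀ ∈ Q k := hQsub k hk
    have hyj : ∀ j, j ≠ i → y j ∈ Icc (z k j - r k) (z k j + r k) := by
      intro j hj
      have h2 := Set.mem_pi.mp hQk j (mem_univ j)
      rwa [Function.update_of_ne hj] at h2
    have hind : (fun s => (Q k).indicator (fun _ => coef k) (Function.update y i s))
        = (Icc (z k i - r k) (z k i + r k)).indicator (fun _ => coef k) := by
      funext s
      by_cases hs : s ∈ Icc (z k i - r k) (z k i + r k)
      · rw [indicator_of_mem hs, indicator_of_mem]
        refine Set.mem_pi.mpr fun j _ => ?_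
        rcases eq_or_ne j i with rfl | hj
        · rwa [Function.update_self]
        · rw [Function.update_of_ne hj]
          exact hyj j hj
      · rw [indicator_of_notMem hs, indicator_of_notMem]
        intro hmem
        apply hs
        have h7 := Set.mem_pi.mp hmem i (mem_univ i)
        rwa [Function.update_self] at h7
    calc (1 : ℝ≥0∞) = coef k * ENNReal.ofReal (2 * r k) :=
          (ENNReal.inv_mul_cancel (h2r0 k) (h2rt k)).symm
      _ = ∫⁻ s, (Icc (z k i - r k) (z k i + r k)).indicator (fun _ => coef k) s := by
          rw [lintegral_indicator_const measurableSet_Icc, Real.volume_Icc]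
          congr 1
          congr 1
          ring
      _ = ∫⁻ s, (Q k).indicator (fun _ => coef k) (Function.update y i s) := by rw [hind]
      _ ≤ ∫⁻ s, F (Function.update y i s) :=
          lintegral_mono fun s => ENNReal.le_tsum k
  have hcard : (Fintype.card (Fin n) : ℝ) = (n : ℝ) := by simp
  -- Step 1 : volume of E' is at most the grid-lines quantity
  have step1 : volume E' ≤
      ∫⁻ y, ∏ i, (∫⁻ s, F (Function.update y i s)) ^ ((1 : ℝ) / ((Fintype.card (Fin n) : ℝ) - 1)) := by
    rw [← lintegral_indicator_one hE'open.measurableSet]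
    refine lintegral_mono fun y => ?_
    by_cases hy : y ∈ E'
    · rw [indicator_of_mem hy]
      refine Finset.one_le_prod' fun i _ => ?_
      rw [← ENNReal.one_rpow ((1 : ℝ) / ((Fintype.card (Fin n) : ℝ) - 1))]
      apply ENNReal.rpow_le_rpow (key y hy i)
      rw [hcard]
      positivity
    · rw [indicator_of_notMem hy]
      exact zero_le
  -- Step 2 : grid-lines lemma
  have hp : Real.HolderConjugate (Fintype.card (Fin n)) ((n : ℝ) / ((n : ℝ) - 1)) := by
    have h1 : (1 : ℝ) < (n : ℝ) := by linarith
    have := Real.HolderConjugate.conjExponent h1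
    rw [Real.conjExponent] at this
    simpa [hcard] using this
  have step2 :
      (∫⁻ y, ∏ i, (∫⁻ s, F (Function.update y i s)) ^ ((1 : ℝ) / ((Fintype.card (Fin n) : ℝ) - 1)))
        ≤ (∫⁻ y, F y) ^ ((n : ℝ) / ((n : ℝ) - 1)) := by
    have h := MeasureTheory.lintegral_prod_lintegral_pow_le
      (A := fun _ : Fin n => ℝ) (fun _ => (volume : Measure ℝ)) hp hFmeas
    rw [← MeasureTheory.volume_pi] at h
    exact h
  -- Step 3 : compute the integral of F
  have step3 : (∫⁻ y, F y) = ∑' k, ENNReal.ofReal (2 * r k) ^ (n - 1 : ℕ) := by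
    rw [hF]
    rw [lintegral_tsum fun k => (measurable_const.indicator (hQm k)).aemeasurable]
    refine tsum_congr fun k => ?_
    rw [lintegral_indicator_const (hQm k)]
    have hvolQ : volume (Q k) = ENNReal.ofReal (2 * r k) ^ (n : ℕ) := by
      rw [hQ]
      rw [volume_pi_pi]
      have : ∀ j : Fin n, volume (Icc (z k j - r k) (z k j + r k))
          = ENNReal.ofReal (2 * r k) := by
        intro j
        rw [Real.volume_Icc]
        congr 1
        ring
      simp only [this]
      rw [Finset.prod_const, Finset.card_univ, Fintype.card_fin]
    have hn' : ENNReal.ofReal (2 * r k) ^ (n : ℕ)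
        = ENNReal.ofReal (2 * r k) ^ (n - 1 : ℕ) * ENNReal.ofReal (2 * r k) := by
      rw [← pow_succ]
      congr 1
      omega
    rw [hvolQ, hn', hcoef]
    rw [mul_comm ((ENNReal.ofReal (2 * r k))⁻¹), mul_assoc, mul_comm (ENNReal.ofReal (2 * r k)),
      ENNReal.inv_mul_cancel (h2r0 k) (h2rt k), mul_one]
  -- Step 4 : bound the sum
  have hcast : ((n - 1 : ℕ) : ℝ) = d := by
    rw [hdd]
    push_cast [Nat.cast_sub (by omega : 1 ≤ n)]
    ring
  have step4 : (∑' k, ENNReal.ofReal (2 * r k) ^ (n - 1 : ℕ)) ≤ P * M + ε := by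
    have hterm : ∀ k, ENNReal.ofReal (2 * r k) ^ (n - 1 : ℕ)
        ≤ P * (diam (t k) ^ d + ENNReal.ofReal (c * (1 / 2) ^ k) ^ d) := by
      intro k
      set a := diam (t k) with ha
      set b := ENNReal.ofReal (c * (1 / 2) ^ k) with hb
      have hsplit : ENNReal.ofReal (2 * r k) = 2 * (a + b) := by
        rw [hrdef]
        have h1 : (2:ℝ) * ((diam (t k)).toReal + c * (1 / 2) ^ k)
            = 2 * (diam (t k)).toReal + 2 * (c * (1 / 2) ^ k) := by ring
        rw [h1, ENNReal.ofReal_add (by positivity) (by positivity),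
          ENNReal.ofReal_mul (by norm_num), ENNReal.ofReal_mul (by norm_num : (0:ℝ) ≤ 2),
          ENNReal.ofReal_toReal (hfink k), ENNReal.ofReal_ofNat, mul_add]
      have hpow : ENNReal.ofReal (2 * r k) ^ (n - 1 : ℕ) = (2 * (a + b)) ^ d := by
        rw [hsplit, ← ENNReal.rpow_natCast, hcast]
      rw [hpow]
      have hmax : (a + b) ^ d ≤ (2:ℝ≥0∞) ^ d * (a ^ d + b ^ d) := by
        have h1 : a + b ≤ 2 * (a ⊔ b) := by
          rw [two_mul]
          exact add_le_add le_sup_left le_sup_right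
        have h2 : (a + b) ^ d ≤ (2 * (a ⊔ b)) ^ d := ENNReal.rpow_le_rpow h1 hd.le
        rw [ENNReal.mul_rpow_of_nonneg _ _ hd.le] at h2
        refine h2.trans ?_
        gcongr
        rcases le_total a b with h | h
        · rw [sup_eq_right.mpr h]; exact le_add_self
        · rw [sup_eq_left.mpr h]; exact self_le_add_right _ _
      calc (2 * (a + b)) ^ d = (2:ℝ≥0∞) ^ d * (a + b) ^ d := by
            rw [ENNReal.mul_rpow_of_nonneg _ _ hd.le]
        _ ≤ (2:ℝ≥0∞) ^ d * ((2:ℝ≥0∞) ^ d * (a ^ d + b ^ d)) := by gcongr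
        _ = P * (a ^ d + b ^ d) := by
            rw [← mul_assoc, ← ENNReal.mul_rpow_of_nonneg _ _ hd.le, hP]
            norm_num
    have hgeo : (∑' k, ENNReal.ofReal (c * (1 / 2) ^ k) ^ d) ≤ 2 * δ := by
      have h1 : ∀ k : ℕ, ENNReal.ofReal (c * (1 / 2) ^ k) ^ d
          ≤ ENNReal.ofReal c ^ d * (2⁻¹ : ℝ≥0∞) ^ k := by
        intro k
        rw [ENNReal.ofReal_mul hc0.le, ENNReal.mul_rpow_of_nonneg _ _ hd.le]
        refine mul_le_mul' le_rfl ?_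
        have h2 : ENNReal.ofReal ((1 / 2 : ℝ) ^ k) = (2⁻¹ : ℝ≥0∞) ^ k := by
          rw [ENNReal.ofReal_pow (by norm_num)]
          congr 1
          rw [one_div, ENNReal.ofReal_inv_of_pos (by norm_num)]
          norm_num
        rw [h2, ← ENNReal.rpow_natCast ((2:ℝ≥0∞)⁻¹) k, ← ENNReal.rpow_mul]
        apply ENNReal.rpow_le_rpow_of_exponent_ge (by norm_num)
        have : (0:ℝ) ≤ (k : ℝ) := Nat.cast_nonneg k
        nlinarith
      calc (∑' k, ENNReal.ofReal (c * (1 / 2) ^ k) ^ d)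
          ≤ ∑' k : ℕ, ENNReal.ofReal c ^ d * (2⁻¹ : ℝ≥0∞) ^ k := ENNReal.tsum_le_tsum h1
        _ = ENNReal.ofReal c ^ d * ∑' k : ℕ, (2⁻¹ : ℝ≥0∞) ^ k := ENNReal.tsum_mul_left
        _ = ENNReal.ofReal c ^ d * 2 := by
            rw [ENNReal.tsum_geometric, ENNReal.one_sub_inv_two, inv_inv]
        _ ≤ δ * 2 := by gcongr
        _ = 2 * δ := mul_comm _ _
    calc (∑' k, ENNReal.ofReal (2 * r k) ^ (n - 1 : ℕ))
        ≤ ∑' k, P * (diam (t k) ^ d + ENNReal.ofReal (c * (1 / 2) ^ k) ^ d) :=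
          ENNReal.tsum_le_tsum hterm
      _ = P * ((∑' k, diam (t k) ^ d) + ∑' k, ENNReal.ofReal (c * (1 / 2) ^ k) ^ d) := by
          rw [ENNReal.tsum_mul_left, ENNReal.tsum_add]
      _ ≤ P * ((M + ε₁) + 2 * δ) := by gcongr
      _ = P * M + (P * ε₁ + P * (2 * δ)) := by ring
      _ = P * M + ε := by
          congr 1
          have h1 : P * ε₁ = (ε : ℝ≥0∞) / 2 := by
            rw [hε₁, mul_comm ((ε : ℝ≥0∞) / 2), ← mul_assoc,
              ENNReal.mul_inv_cancel hP0 hPtop, one_mul]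
          have h2 : P * (2 * δ) = (ε : ℝ≥0∞) / 2 := by
            rw [hδ, mul_comm ((ε : ℝ≥0∞) / 2), ← mul_assoc, ← mul_assoc]
            rw [show P * 2 * (P * 2)⁻¹ = 1 from
              ENNReal.mul_inv_cancel (by simp [hP0]) (ENNReal.mul_ne_top hPtop (by norm_num))]
            rw [one_mul]
          rw [h1, h2, ENNReal.add_halves]
  -- final chain
  have hvolE' : volume E ^ (d / (n:ℝ)) = volume E' ^ (d / (n:ℝ)) := by rw [hvol]
  calc volume E ^ (((n:ℝ) - 1) / (n:ℝ)) = volume E' ^ (d / (n:ℝ)) := by rw [← hdd, hvolE']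
    _ ≤ ((∫⁻ y, F y) ^ ((n : ℝ) / ((n : ℝ) - 1))) ^ (d / (n:ℝ)) := by
        apply ENNReal.rpow_le_rpow (step1.trans step2) (by positivity)
    _ = (∫⁻ y, F y) ^ (((n : ℝ) / ((n : ℝ) - 1)) * (d / (n:ℝ))) := by
        rw [← ENNReal.rpow_mul]
    _ = ∫⁻ y, F y := by
        rw [show ((n : ℝ) / ((n : ℝ) - 1)) * (d / (n:ℝ)) = 1 by
          rw [hdd]; field_simp; exact div_self hd.ne']
        exact ENNReal.rpow_one _
    _ ≤ P * M + ε := by rw [step3]; exact step4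


/-- An isoperimetric-type inequality: there is `C = C(n) > 0` such that for
all Lipschitz `u, v : ℝⁿ → ℝ` and every `τ` for which `E := {u > τ > v}` is bounded,
`Lⁿ(E)^{(n-1)/n} ≤ C (H^{n-1}({u ≥ v} ∩ {u = τ}) + H^{n-1}({u ≥ v} ∩ {v = τ}))`. -/
theorem statement5 (n : ℕ) (hn : 2 ≤ n) :
    ∃ C : ℝ, 0 < C ∧
      ∀ u v : EuclideanSpace ℝ (Fin n) → ℝ,
        (∃ K, LipschitzWith K u) → (∃ K, LipschitzWith K v) →
        ∀ τ : ℝ, Bornology.IsBounded {x | u x > τ ∧ τ > v x} →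
          (volume {x | u x > τ ∧ τ > v x}) ^ (((n : ℝ) - 1) / n) ≤
            ENNReal.ofReal C *
              (μH[(n - 1 : ℕ)] ({x | v x ≤ u x} ∩ {x | u x = τ}) +
               μH[(n - 1 : ℕ)] ({x | v x ≤ u x} ∩ {x | v x = τ})) := by
  refine ⟨4 ^ n, by positivity, ?_⟩
  intro u v hu hv τ hbdd
  obtain ⟨Ku, hKu⟩ := hu
  obtain ⟨Kv, hKv⟩ := hv
  set E := {x : EuclideanSpace ℝ (Fin n) | u x > τ ∧ τ > v x} with hEdef
  have hE : IsOpen E := by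
    have h1 : IsOpen {x : EuclideanSpace ℝ (Fin n) | u x > τ} :=
      isOpen_lt continuous_const hKu.continuous
    have h2 : IsOpen {x : EuclideanSpace ℝ (Fin n) | τ > v x} :=
      isOpen_lt hKv.continuous continuous_const
    exact h1.inter h2
  have hfr : frontier E ⊆
      ({x | v x ≤ u x} ∩ {x | u x = τ}) ∪ ({x | v x ≤ u x} ∩ {x | v x = τ}) := by
    intro x hx
    rw [hE.frontier_eq] at hx
    obtain ⟨hxc, hxe⟩ := hx
    have hclosed : IsClosed {x : EuclideanSpace ℝ (Fin n) | u x ≥ τ ∧ τ ≥ v x} := by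
      have h1 : IsClosed {x : EuclideanSpace ℝ (Fin n) | u x ≥ τ} :=
        isClosed_le continuous_const hKu.continuous
      have h2 : IsClosed {x : EuclideanSpace ℝ (Fin n) | τ ≥ v x} :=
        isClosed_le hKv.continuous continuous_const
      exact h1.inter h2
    have hsub : closure E ⊆ {x | u x ≥ τ ∧ τ ≥ v x} :=
      closure_minimal (fun x hx => ⟨le_of_lt hx.1, le_of_lt hx.2⟩) hclosed
    obtain ⟨h1, h2⟩ := hsub hxc
    have hvu : v x ≤ u x := le_trans h2 h1
    rcases eq_or_lt_of_le h1 with he | hlt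
    · exact Or.inl ⟨hvu, he.symm⟩
    · right
      refine ⟨hvu, ?_⟩
      show v x = τ
      by_contra hne
      exact hxe ⟨hlt, lt_of_le_of_ne h2 (fun h => hne h)⟩
  have hcast : ((n - 1 : ℕ) : ℝ) = (n : ℝ) - 1 := by
    push_cast [Nat.cast_sub (by omega : 1 ≤ n)]
    ring
  calc volume E ^ (((n : ℝ) - 1) / n)
      ≤ (4 : ℝ≥0∞) ^ ((n : ℝ) - 1) * μH[(n : ℝ) - 1] (frontier E) := iso_core hn E hE hbdd
    _ ≤ ENNReal.ofReal (4 ^ n) *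
        (μH[(n - 1 : ℕ)] ({x | v x ≤ u x} ∩ {x | u x = τ}) +
         μH[(n - 1 : ℕ)] ({x | v x ≤ u x} ∩ {x | v x = τ})) := by
        rw [hcast]
        have hC : (4 : ℝ≥0∞) ^ ((n : ℝ) - 1) ≤ ENNReal.ofReal (4 ^ n) := by
          rw [ENNReal.ofReal_pow (by norm_num), show ENNReal.ofReal 4 = 4 by
            rw [ENNReal.ofReal_ofNat]]
          rw [← ENNReal.rpow_natCast (4 : ℝ≥0∞) n]
          exact ENNReal.rpow_le_rpow_of_exponent_le (by norm_num) (by linarith)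
        have hμ : μH[(n : ℝ) - 1] (frontier E) ≤
            μH[(n : ℝ) - 1] ({x | v x ≤ u x} ∩ {x | u x = τ}) +
            μH[(n : ℝ) - 1] ({x | v x ≤ u x} ∩ {x | v x = τ}) :=
          (measure_mono hfr).trans (measure_union_le _ _)
        exact mul_le_mul' hC hμ
end
end

section
/- Let p > 0 and ε ∈ (0,1]. There exists a constant C_ε > 0, depending only on p and ε, such that for every R > 0 and every a ∈ ℝ with |a| ≤ R, setting ρ := √(R² − a²), one has ∫_0^ρ e^{p√(r² + a²)} dr ≤ (2ε² R + C_ε) e^{pR}. -/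
/-- Key elementary inequality: `ρ * exp(-p ε² ρ² / (2R)) ≤ ε² R + 1/(2 p ε⁴)`. -/
lemma key_ineq (p ε R ρ : ℝ) (hp : 0 < p) (hε0 : 0 < ε) (hR : 0 < R) (hρ0 : 0 ≤ ρ) :
    ρ * Real.exp (-(p * ε ^ 2 * ρ ^ 2 / (2 * R))) ≤ ε ^ 2 * R + 1 / (2 * p * ε ^ 4) := by
  set u : ℝ := p * ε ^ 2 * ρ ^ 2 / (2 * R) with hu
  have hu0 : 0 ≤ u := by positivity
  have huR : u * (2 * R) = p * ε ^ 2 * ρ ^ 2 := by rw [hu]; field_simp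
  set c : ℝ := 1 / (2 * p * ε ^ 4) with hc
  have hcpos : 0 < c := by positivity
  have hc1 : c * (2 * p * ε ^ 4) = 1 := by rw [hc]; field_simp
  have hexple : Real.exp (-u) ≤ 1 := Real.exp_le_one_iff.mpr (neg_nonpos.mpr hu0)
  have hexppos : 0 < Real.exp (-u) := Real.exp_pos _
  by_cases hcase : p * ε ^ 2 * ρ ^ 2 ≤ 2 * R
  · have h1 : ρ * Real.exp (-u) ≤ ρ := by nlinarith
    refine h1.trans ?_
    have hpos2 : (0:ℝ) < 2 * p * ε ^ 4 := by positivity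
    rw [← mul_le_mul_iff_of_pos_right hpos2, add_mul, hc1]
    have hmul : p * ε ^ 6 * (p * ε ^ 2 * ρ ^ 2) ≤ p * ε ^ 6 * (2 * R) :=
      mul_le_mul_of_nonneg_left hcase (by positivity)
    nlinarith [sq_nonneg (p * ε ^ 4 * ρ - 1)]
  · push_neg at hcase
    have hρpos : 0 < ρ := by
      rcases hρ0.lt_or_eq with h | h
      · exact h
      · exfalso; rw [← h] at hcase; simp at hcase; linarith
    have hupos : 0 < u := by
      rw [hu]; positivity
    have hexp : Real.exp (-u) ≤ 1 / u := by
      rw [Real.exp_neg, one_div]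
      exact inv_anti₀ hupos (by linarith [Real.add_one_le_exp u])
    have h2 : ρ * Real.exp (-u) ≤ ρ / u := by
      rw [div_eq_mul_one_div]
      exact mul_le_mul_of_nonneg_left hexp hρ0
    refine h2.trans ?_
    rw [div_le_iff₀ hupos]
    have hpos3 : (0:ℝ) < 2 * R * (2 * p * ε ^ 4) := by positivity
    rw [← mul_le_mul_iff_of_pos_right hpos3]
    have hrw : (ε ^ 2 * R + c) * u * (2 * R * (2 * p * ε ^ 4))
        = (ε ^ 2 * R * (2 * p * ε ^ 4) + c * (2 * p * ε ^ 4)) * (u * (2 * R)) := by ring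
    rw [hrw, hc1, huR]
    -- goal: ρ * (2R * 2pε⁴) ≤ (2pε⁶R + 1) * (pε²ρ²)
    have hmul2 : 2 * p ^ 2 * ε ^ 8 * R * ρ ^ 2 * (2 * R)
        < 2 * p ^ 2 * ε ^ 8 * R * ρ ^ 2 * (p * ε ^ 2 * ρ ^ 2) :=
      mul_lt_mul_of_pos_left hcase (by positivity)
    have h5 : (0:ℝ) ≤ 2 * p ^ 2 * ε ^ 8 * R * ρ ^ 2 + p * ε ^ 2 * ρ ^ 2
        + ρ * (2 * R * (2 * p * ε ^ 4)) := by positivity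
    nlinarith [sq_nonneg (2 * p ^ 2 * ε ^ 8 * R * ρ ^ 2 - p * ε ^ 2 * ρ ^ 2), h5, hmul2]

set_option maxHeartbeats 1000000 in
/-- For `p > 0` and `ε ∈ (0,1]` there is `C_ε > 0` (depending only on `p, ε`)
such that for all `R > 0` and `|a| ≤ R`, with `ρ := √(R² - a²)`,
`∫_0^ρ e^{p√(r² + a²)} dr ≤ (2ε² R + C_ε) e^{pR}`. -/
theorem statement6 (p ε : ℝ) (hp : 0 < p) (hε : ε ∈ Set.Ioc (0 : ℝ) 1) :
    ∃ Cε : ℝ, 0 < Cε ∧ ∀ R a : ℝ, 0 < R → |a| ≤ R →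
      ∫ r in (0 : ℝ)..(Real.sqrt (R ^ 2 - a ^ 2)), Real.exp (p * Real.sqrt (r ^ 2 + a ^ 2))
        ≤ (2 * ε ^ 2 * R + Cε) * Real.exp (p * R) := by
  obtain ⟨hε0, hε1⟩ := hε
  refine ⟨1 / (2 * p * ε ^ 4), by positivity, fun R a hR ha => ?_⟩
  have ha2 : a ^ 2 ≤ R ^ 2 := by nlinarith [abs_nonneg a, sq_abs a]
  set ρ := Real.sqrt (R ^ 2 - a ^ 2) with hρdef
  have hρ0 : 0 ≤ ρ := Real.sqrt_nonneg _
  have hρsq : ρ ^ 2 = R ^ 2 - a ^ 2 := Real.sq_sqrt (by linarith)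
  have hρR : ρ ≤ R := by nlinarith [sq_nonneg a]
  have hε2 : ε ^ 2 ≤ 1 := by nlinarith
  set m := ρ * (1 - ε ^ 2) with hm
  have hm0 : 0 ≤ m := by
    apply mul_nonneg hρ0; linarith
  have hmρ : m ≤ ρ := by nlinarith [mul_nonneg hρ0 (sq_nonneg ε)]
  have hcont : Continuous fun r : ℝ => Real.exp (p * Real.sqrt (r ^ 2 + a ^ 2)) :=
    Real.continuous_exp.comp (continuous_const.mul
      (Real.continuous_sqrt.comp ((continuous_pow 2).add continuous_const)))
  have hint : ∀ x y : ℝ, IntervalIntegrable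
      (fun r => Real.exp (p * Real.sqrt (r ^ 2 + a ^ 2))) MeasureTheory.volume x y :=
    fun x y => hcont.intervalIntegrable x y
  rw [← intervalIntegral.integral_add_adjacent_intervals (hint 0 m) (hint m ρ)]
  set C1 : ℝ := Real.exp (p * Real.sqrt (R ^ 2 - ε ^ 2 * ρ ^ 2)) with hC1def
  -- bound on the first piece
  have hb1 : (∫ r in (0:ℝ)..m, Real.exp (p * Real.sqrt (r ^ 2 + a ^ 2))) ≤ m * C1 := by
    have ptw : ∀ r ∈ Set.Icc (0:ℝ) m, Real.exp (p * Real.sqrt (r ^ 2 + a ^ 2)) ≤ C1 := by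
      intro r hr
      rw [hC1def]
      apply Real.exp_le_exp.mpr
      apply mul_le_mul_of_nonneg_left _ hp.le
      apply Real.sqrt_le_sqrt
      have hr2 : r * r ≤ m * m := mul_self_le_mul_self hr.1 hr.2
      have h1ε : (0:ℝ) ≤ 1 - ε ^ 2 := by linarith
      nlinarith [sq_nonneg ρ, mul_nonneg (mul_nonneg h1ε (sq_nonneg ε)) (sq_nonneg ρ)]
    calc (∫ r in (0:ℝ)..m, Real.exp (p * Real.sqrt (r ^ 2 + a ^ 2)))
        ≤ ∫ _r in (0:ℝ)..m, C1 :=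
          intervalIntegral.integral_mono_on hm0 (hint 0 m) intervalIntegrable_const ptw
      _ = m * C1 := by simp
  -- bound on the second piece
  have hb2 : (∫ r in m..ρ, Real.exp (p * Real.sqrt (r ^ 2 + a ^ 2)))
      ≤ (ρ - m) * Real.exp (p * R) := by
    have ptw : ∀ r ∈ Set.Icc m ρ, Real.exp (p * Real.sqrt (r ^ 2 + a ^ 2))
        ≤ Real.exp (p * R) := by
      intro r hr
      apply Real.exp_le_exp.mpr
      apply mul_le_mul_of_nonneg_left _ hp.le
      have hr2 : r * r ≤ ρ * ρ := mul_self_le_mul_self (hm0.trans hr.1) hr.2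
      calc Real.sqrt (r ^ 2 + a ^ 2) ≤ Real.sqrt (R ^ 2) := by
            apply Real.sqrt_le_sqrt; nlinarith
        _ = R := Real.sqrt_sq hR.le
    calc (∫ r in m..ρ, Real.exp (p * Real.sqrt (r ^ 2 + a ^ 2)))
        ≤ ∫ _r in m..ρ, Real.exp (p * R) :=
          intervalIntegral.integral_mono_on hmρ (hint m ρ) intervalIntegrable_const ptw
      _ = (ρ - m) * Real.exp (p * R) := by simp
  -- bound C1
  have heps2 : ε ^ 2 * ρ ^ 2 ≤ R ^ 2 := by nlinarith [sq_nonneg ρ]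
  have hnn : 0 ≤ R - ε ^ 2 * ρ ^ 2 / (2 * R) := by
    rw [sub_nonneg, div_le_iff₀ (by positivity)]
    nlinarith
  have ht : ε ^ 2 * ρ ^ 2 / (2 * R) * (2 * R) = ε ^ 2 * ρ ^ 2 := by field_simp
  have hsq2 : Real.sqrt (R ^ 2 - ε ^ 2 * ρ ^ 2) ≤ R - ε ^ 2 * ρ ^ 2 / (2 * R) := by
    calc Real.sqrt (R ^ 2 - ε ^ 2 * ρ ^ 2)
        ≤ Real.sqrt ((R - ε ^ 2 * ρ ^ 2 / (2 * R)) ^ 2) := by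
          apply Real.sqrt_le_sqrt
          nlinarith [sq_nonneg (ε ^ 2 * ρ ^ 2 / (2 * R))]
      _ = R - ε ^ 2 * ρ ^ 2 / (2 * R) := Real.sqrt_sq hnn
  have hC1 : C1 ≤ Real.exp (-(p * ε ^ 2 * ρ ^ 2 / (2 * R))) * Real.exp (p * R) := by
    rw [hC1def, ← Real.exp_add]
    apply Real.exp_le_exp.mpr
    have h := mul_le_mul_of_nonneg_left hsq2 hp.le
    calc p * Real.sqrt (R ^ 2 - ε ^ 2 * ρ ^ 2) ≤ p * (R - ε ^ 2 * ρ ^ 2 / (2 * R)) := h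
      _ = -(p * ε ^ 2 * ρ ^ 2 / (2 * R)) + p * R := by ring
  have hkey := key_ineq p ε R ρ hp hε0 hR hρ0
  have hexpRpos : (0:ℝ) < Real.exp (p * R) := Real.exp_pos _
  have hstep1 : m * C1 ≤ ρ * (Real.exp (-(p * ε ^ 2 * ρ ^ 2 / (2 * R))) * Real.exp (p * R)) :=
    mul_le_mul hmρ hC1 (Real.exp_pos _).le hρ0
  have hstep2 : ρ * (Real.exp (-(p * ε ^ 2 * ρ ^ 2 / (2 * R))) * Real.exp (p * R))
      ≤ (ε ^ 2 * R + 1 / (2 * p * ε ^ 4)) * Real.exp (p * R) := by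
    rw [← mul_assoc]
    exact mul_le_mul_of_nonneg_right hkey hexpRpos.le
  have hstep3 : (ρ - m) * Real.exp (p * R) ≤ ε ^ 2 * R * Real.exp (p * R) := by
    apply mul_le_mul_of_nonneg_right _ hexpRpos.le
    have : ρ - m = ε ^ 2 * ρ := by rw [hm]; ring
    rw [this]
    exact mul_le_mul_of_nonneg_left hρR (sq_nonneg ε)
  linarith [hb1, hb2, hstep1, hstep2, hstep3]
end

section
/- Let n ≥ 3 be an integer and p > 1. There exists a constant C = C(n, p) > 0 such that for every R > 0 and every x₀ ∈ ℝ^n, ∫_{B_R(x₀) ∩ {x_n = 0}} e^{p(|x − x₀| − R)} dH^{n−1}(x) ≤ C R^{n−2}. -/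
open MeasureTheory Set Metric
open scoped ENNReal NNReal

set_option maxHeartbeats 1000000

noncomputable def snocE (m : ℕ) (y : EuclideanSpace ℝ (Fin m)) :
    EuclideanSpace ℝ (Fin (m+1)) := WithLp.toLp 2 (Fin.snoc y.ofLp 0 : Fin (m+1) → ℝ)

noncomputable def initE (m : ℕ) (x : EuclideanSpace ℝ (Fin (m+1))) :
    EuclideanSpace ℝ (Fin m) := WithLp.toLp 2 (fun i : Fin m => x i.castSucc)

lemma snoc_isometry (m : ℕ) : Isometry (snocE m) := by
  apply Isometry.of_dist_eq
  intro a b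
  refine ((EuclideanSpace.dist_eq (snocE m a) (snocE m b)).trans ?_).trans
    (EuclideanSpace.dist_eq a b).symm
  rw [Fin.sum_univ_castSucc]
  simp [snocE, Fin.snoc_castSucc, Fin.snoc_last]

lemma haus_le_vol (m : ℕ) :
    ∃ c : ℝ≥0∞, c ≠ ⊤ ∧
      (μH[(m : ℕ)] : Measure (EuclideanSpace ℝ (Fin m))) ≤
        c • (volume : Measure (EuclideanSpace ℝ (Fin m))) := by
  set K : ℝ≥0 := (Fintype.card (Fin m) : ℝ≥0) ^ ((1 : ℝ≥0∞) / 2).toReal with hK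
  refine ⟨(K : ℝ≥0∞) ^ (m : ℝ), ?_, ?_⟩
  · exact ENNReal.rpow_ne_top_of_nonneg (by positivity) ENNReal.coe_ne_top
  rw [Measure.le_iff]
  intro s hs
  have hL : LipschitzWith K (⇑(WithLp.equiv 2 (Fin m → ℝ)).symm) :=
    (PiLp.antilipschitzWith_ofLp 2 (fun _ : Fin m => ℝ)).to_rightInverse
      (fun _ => rfl)
  have h1 : μH[(m:ℕ)] s ≤ (K : ℝ≥0∞) ^ ((m:ℕ) : ℝ) *
      (μH[(m:ℕ)] : Measure (Fin m → ℝ)) ((WithLp.equiv 2 (Fin m → ℝ)) '' s) := by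
    have h := hL.hausdorffMeasure_image_le (d := ((m:ℕ):ℝ)) (by positivity)
      ((WithLp.equiv 2 (Fin m → ℝ)) '' s)
    rwa [Equiv.symm_image_image] at h
  have h2 : (μH[(m:ℕ)] : Measure (Fin m → ℝ)) = volume := by
    simpa using (hausdorffMeasure_pi_real (ι := Fin m))
  have h3 : (volume : Measure (Fin m → ℝ)) ((WithLp.equiv 2 (Fin m → ℝ)) '' s)
      = volume s := by
    have hvp := EuclideanSpace.volume_preserving_symm_measurableEquiv_toLp (Fin m)
    have himg : (WithLp.equiv 2 (Fin m → ℝ)) '' s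
        = (MeasurableEquiv.toLp 2 (Fin m → ℝ)) ⁻¹' s := by
      exact Equiv.image_eq_preimage_symm _ s
    rw [himg, ← hvp.measure_preimage
      (((MeasurableEquiv.toLp 2 (Fin m → ℝ)).measurable hs).nullMeasurableSet)]
    congr 1
  calc μH[(m:ℕ)] s ≤ _ := h1
    _ = (K : ℝ≥0∞) ^ ((m:ℕ) : ℝ) * volume s := by rw [h2, h3]
    _ = ((K : ℝ≥0∞) ^ ((m:ℕ) : ℝ) • (volume : Measure (EuclideanSpace ℝ (Fin m)))) s := by
        simp [Measure.smul_apply]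

lemma dist_snocE_sq (m : ℕ) (y : EuclideanSpace ℝ (Fin m))
    (x₀ : EuclideanSpace ℝ (Fin (m+1))) :
    dist (snocE m y) x₀ ^ 2 = dist y (initE m x₀) ^ 2 + (x₀ (Fin.last m)) ^ 2 := by
  rw [(EuclideanSpace.dist_eq (snocE m y) x₀ :), (EuclideanSpace.dist_eq y (initE m x₀) :),
    Real.sq_sqrt (by positivity), Real.sq_sqrt (by positivity), Fin.sum_univ_castSucc]
  simp [snocE, initE, Real.dist_eq, sq_abs]

lemma radial (m : ℕ) (hm : 2 ≤ m) (p R rr : ℝ) (hp : 0 < p) (hR : 0 < R)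
    (hr0 : 0 ≤ rr) (hrR : rr ≤ R) (c₀ : EuclideanSpace ℝ (Fin m)) :
    ∫ y in ball c₀ rr, Real.exp (p * ((dist y c₀)^2 - rr^2) / (2*R))
      ≤ (m * (volume (ball (0 : EuclideanSpace ℝ (Fin m)) 1)).toReal) * (R^(m-2) * (R/p)) := by
  haveI : Nonempty (Fin m) := ⟨⟨0, by omega⟩⟩
  haveI : Nontrivial (EuclideanSpace ℝ (Fin m)) := by
    refine ⟨0, EuclideanSpace.single ⟨0, by omega⟩ 1, fun h => ?_⟩
    have := congrArg (fun z : EuclideanSpace ℝ (Fin m) => z ⟨0, by omega⟩) h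
    simpa using this
  set f₀ : ℝ → ℝ := fun t => if t < rr then Real.exp (p*(t^2 - rr^2)/(2*R)) else 0 with hf₀
  have step1 : ∫ y in ball c₀ rr, Real.exp (p * ((dist y c₀)^2 - rr^2) / (2*R))
      = ∫ y : EuclideanSpace ℝ (Fin m), f₀ (dist y c₀) := by
    rw [← integral_indicator measurableSet_ball]
    congr 1
  have step2 : ∫ y : EuclideanSpace ℝ (Fin m), f₀ (dist y c₀)
      = ∫ y : EuclideanSpace ℝ (Fin m), f₀ ‖y‖ := by
    simp_rw [dist_eq_norm]
    exact integral_sub_right_eq_self (fun y : EuclideanSpace ℝ (Fin m) => f₀ ‖y‖) c₀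
  have step3 : ∫ y : EuclideanSpace ℝ (Fin m), f₀ ‖y‖
      = m • (volume (ball (0 : EuclideanSpace ℝ (Fin m)) 1)).toReal •
          ∫ t in Ioi (0:ℝ), t ^ (m-1) • f₀ t := by
    have h := integral_fun_norm_addHaar (volume : Measure (EuclideanSpace ℝ (Fin m))) f₀
    simpa [finrank_euclideanSpace_fin, measureReal_def] using h
  -- now bound the radial integral
  have hIoi : ∫ t in Ioi (0:ℝ), t ^ (m-1) • f₀ t
      = ∫ t in Ioo (0:ℝ) rr, t ^ (m-1) * Real.exp (p*(t^2 - rr^2)/(2*R)) := by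
    rw [setIntegral_congr_fun measurableSet_Ioi
      (g := (Ioo (0:ℝ) rr).indicator (fun t => t ^ (m-1) * Real.exp (p*(t^2 - rr^2)/(2*R))))
      (fun t ht => ?_), setIntegral_indicator measurableSet_Ioo,
      inter_eq_self_of_subset_right Ioo_subset_Ioi_self]
    by_cases h : t < rr
    · rw [indicator_of_mem (by exact ⟨ht, h⟩), hf₀]
      simp only [smul_eq_mul, if_pos h]
    · rw [indicator_of_notMem (fun hmem => h hmem.2), hf₀]
      simp only [smul_eq_mul, if_neg h, mul_zero]
  have hexpc : Continuous fun t : ℝ => Real.exp (p*(t^2 - rr^2)/(2*R)) := by fun_prop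
  have hcont1 : Continuous fun t : ℝ => t ^ (m-1) * Real.exp (p*(t^2 - rr^2)/(2*R)) := by fun_prop
  have hcont2 : Continuous fun t : ℝ => rr ^ (m-2) * (t * Real.exp (p*(t^2 - rr^2)/(2*R))) := by
    fun_prop
  have hint1 : IntegrableOn (fun t : ℝ => t ^ (m-1) * Real.exp (p*(t^2 - rr^2)/(2*R)))
      (Ioo 0 rr) := by
    exact (hcont1.continuousOn.integrableOn_compact isCompact_Icc).mono_set Ioo_subset_Icc_self
  have hint2 : IntegrableOn (fun t : ℝ => rr ^ (m-2) * (t * Real.exp (p*(t^2 - rr^2)/(2*R))))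
      (Ioo 0 rr) := by
    exact (hcont2.continuousOn.integrableOn_compact isCompact_Icc).mono_set Ioo_subset_Icc_self
  have hmono : ∫ t in Ioo (0:ℝ) rr, t ^ (m-1) * Real.exp (p*(t^2 - rr^2)/(2*R))
      ≤ ∫ t in Ioo (0:ℝ) rr, rr ^ (m-2) * (t * Real.exp (p*(t^2 - rr^2)/(2*R))) := by
    refine setIntegral_mono_on hint1 hint2 measurableSet_Ioo (fun t ht => ?_)
    have h1 : t ^ (m-1) = t ^ (m-2) * t := by
      rw [← pow_succ]
      congr 1
      omega
    have h2 : t ^ (m-2) ≤ rr ^ (m-2) := pow_le_pow_left₀ ht.1.le ht.2.le _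
    have h3 : (0:ℝ) < Real.exp (p*(t^2 - rr^2)/(2*R)) := Real.exp_pos _
    rw [h1]
    calc t ^ (m-2) * t * Real.exp (p*(t^2 - rr^2)/(2*R))
        ≤ rr ^ (m-2) * t * Real.exp (p*(t^2 - rr^2)/(2*R)) := by
          apply mul_le_mul_of_nonneg_right (mul_le_mul_of_nonneg_right h2 ht.1.le) h3.le
      _ = rr ^ (m-2) * (t * Real.exp (p*(t^2 - rr^2)/(2*R))) := by ring
  have hderiv : ∀ t : ℝ, HasDerivAt (fun t : ℝ => (R/p) * Real.exp (p*(t^2 - rr^2)/(2*R)))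
      (t * Real.exp (p*(t^2 - rr^2)/(2*R))) t := by
    intro t
    have h0 : HasDerivAt (fun t : ℝ => t^2 - rr^2) (2*t) t := by
      simpa using (hasDerivAt_pow 2 t).sub_const (rr^2)
    have h1 : HasDerivAt (fun t : ℝ => p*(t^2 - rr^2)/(2*R)) (p*(2*t)/(2*R)) t :=
      (h0.const_mul p).div_const (2*R)
    have h2 := (h1.exp).const_mul (R/p)
    refine h2.congr_deriv ?_
    field_simp
  have hFTCnn : (0:ℝ) ≤ ∫ t in Ioo (0:ℝ) rr, t * Real.exp (p*(t^2-rr^2)/(2*R)) := by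
    refine setIntegral_nonneg measurableSet_Ioo (fun t ht => ?_)
    exact mul_nonneg ht.1.le (Real.exp_pos _).le
  have hFTC : ∫ t in Ioo (0:ℝ) rr, t * Real.exp (p*(t^2-rr^2)/(2*R)) ≤ R / p := by
    have heq : ∫ t in Ioo (0:ℝ) rr, t * Real.exp (p*(t^2-rr^2)/(2*R))
        = ∫ t in (0:ℝ)..rr, t * Real.exp (p*(t^2-rr^2)/(2*R)) := by
      rw [intervalIntegral.integral_of_le hr0, integral_Ioc_eq_integral_Ioo]
    rw [heq, intervalIntegral.integral_eq_sub_of_hasDerivAt (fun t _ => hderiv t)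
      ((continuous_id.mul hexpc).intervalIntegrable 0 rr)]
    have h4 : (0:ℝ) < Real.exp (p*((0:ℝ)^2 - rr^2)/(2*R)) := Real.exp_pos _
    have h5 : (0:ℝ) ≤ R / p := (div_pos hR hp).le
    have h6 : (R/p) * Real.exp (p*(rr^2 - rr^2)/(2*R)) = R/p := by
      simp
    rw [h6]
    nlinarith
  -- assemble
  rw [step1, step2, step3, hIoi]
  rw [nsmul_eq_mul, smul_eq_mul, ← mul_assoc]
  set V : ℝ := (volume (ball (0 : EuclideanSpace ℝ (Fin m)) 1)).toReal with hV
  have hV0 : (0:ℝ) ≤ V := ENNReal.toReal_nonneg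
  have hmV : (0:ℝ) ≤ (m:ℝ) * V := mul_nonneg (Nat.cast_nonneg m) hV0
  refine le_trans (mul_le_mul_of_nonneg_left hmono hmV) ?_
  rw [integral_const_mul]
  refine mul_le_mul_of_nonneg_left ?_ hmV
  have hrrpow : rr ^ (m-2) ≤ R ^ (m-2) := pow_le_pow_left₀ hr0 hrR _
  calc rr ^ (m-2) * ∫ t in Ioo (0:ℝ) rr, t * Real.exp (p*(t^2-rr^2)/(2*R))
      ≤ rr ^ (m-2) * (R/p) := mul_le_mul_of_nonneg_left hFTC (by positivity)
    _ ≤ R ^ (m-2) * (R/p) := mul_le_mul_of_nonneg_right hrrpow (div_pos hR hp).le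

lemma range_snocE (m : ℕ) :
    Set.range (snocE m) = {x : EuclideanSpace ℝ (Fin (m+1)) | x (Fin.last m) = 0} := by
  ext x
  constructor
  · rintro ⟨y, rfl⟩
    show (Fin.snoc y.ofLp 0 : Fin (m+1) → ℝ) (Fin.last m) = 0
    simp
  · intro hx
    refine ⟨initE m x, PiLp.ext fun i => ?_⟩
    refine Fin.lastCases ?_ (fun j => ?_) i
    · show (Fin.snoc (initE m x).ofLp 0 : Fin (m+1) → ℝ) (Fin.last m) = x (Fin.last m)
      rw [Fin.snoc_last]
      exact hx.symm
    · show (Fin.snoc (initE m x).ofLp 0 : Fin (m+1) → ℝ) j.castSucc = x j.castSucc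
      simp [initE]

/-- For `n ≥ 3` and `p > 1` there is `C = C(n,p) > 0` such that for every
`R > 0` and `x₀ ∈ ℝⁿ`, `∫_{B_R(x₀) ∩ {xₙ = 0}} e^{p(|x - x₀| - R)} dH^{n-1}(x) ≤ C R^{n-2}`. -/
theorem statement11 (n : ℕ) (hn : 3 ≤ n) (p : ℝ) (hp : 1 < p) :
    ∃ C : ℝ, 0 < C ∧ ∀ R : ℝ, 0 < R → ∀ x₀ : EuclideanSpace ℝ (Fin n),
      ∫ x in ball x₀ R ∩ {x : EuclideanSpace ℝ (Fin n) | x ⟨n - 1, by omega⟩ = 0},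
          Real.exp (p * (dist x x₀ - R)) ∂(μH[(n - 1 : ℕ)])
        ≤ C * R ^ (n - 2) := by
  obtain ⟨m, rfl⟩ : ∃ m, n = m + 1 := ⟨n - 1, by omega⟩
  have hm : 2 ≤ m := by omega
  have hp0 : 0 < p := lt_trans one_pos hp
  obtain ⟨c, hc_top, hc⟩ := haus_le_vol m
  set V : ℝ := (volume (ball (0 : EuclideanSpace ℝ (Fin m)) 1)).toReal with hV
  refine ⟨c.toReal * ((m * V) * (1 / p)) + 1,
    lt_add_of_le_of_pos (by positivity) one_pos, ?_⟩
  intro R hR x₀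
  show ∫ x in ball x₀ R ∩ {x : EuclideanSpace ℝ (Fin (m+1)) | x (Fin.last m) = 0},
      Real.exp (p * (dist x x₀ - R)) ∂(μH[(m : ℕ)])
    ≤ (c.toReal * ((m * V) * (1 / p)) + 1) * R ^ (m - 1)
  set e := snocE m with he
  set S : Set (EuclideanSpace ℝ (Fin (m+1))) :=
    ball x₀ R ∩ {x : EuclideanSpace ℝ (Fin (m+1)) | x (Fin.last m) = 0} with hS
  have hiso := snoc_isometry m
  have hSmeas : MeasurableSet S := by
    refine measurableSet_ball.inter ?_
    exact (isClosed_eq (EuclideanSpace.proj (𝕜 := ℝ) (Fin.last m)).continuous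
      continuous_const).measurableSet
  have hSsub : S ⊆ Set.range e := by
    rw [he, range_snocE]
    exact inter_subset_right
  have hemb : MeasurableEmbedding e := hiso.isClosedEmbedding.measurableEmbedding
  -- transfer the integral to EuclideanSpace ℝ (Fin m) with Hausdorff measure
  have htrans : ∫ x in S, Real.exp (p * (dist x x₀ - R)) ∂(μH[(m : ℕ)])
      = ∫ y in e ⁻¹' S, Real.exp (p * (dist (e y) x₀ - R)) ∂(μH[(m : ℕ)]) := by
    have h1 : (μH[(m : ℕ)] :
        Measure (EuclideanSpace ℝ (Fin (m+1)))).restrict S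
        = ((μH[(m : ℕ)] : Measure (EuclideanSpace ℝ (Fin (m+1)))).restrict
            (Set.range e)).restrict S := by
      rw [Measure.restrict_restrict hSmeas, inter_eq_self_of_subset_left hSsub]
    show ∫ x, Real.exp (p * (dist x x₀ - R))
        ∂((μH[(m : ℕ)] : Measure (EuclideanSpace ℝ (Fin (m+1)))).restrict S) = _
    rw [h1, ← hiso.map_hausdorffMeasure (Or.inl (by positivity))]
    rw [← hemb.setIntegral_map (fun x => Real.exp (p * (dist x x₀ - R))) S]
  rw [htrans]
  set a : ℝ := x₀ (Fin.last m) with ha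
  set c₀ := initE m x₀ with hc₀
  set rr : ℝ := Real.sqrt (R^2 - a^2) with hrr
  have hrr0 : 0 ≤ rr := Real.sqrt_nonneg _
  have hrrR : rr ≤ R := by
    rw [hrr]
    calc Real.sqrt (R^2 - a^2) ≤ Real.sqrt (R^2) := Real.sqrt_le_sqrt (by nlinarith)
      _ = R := Real.sqrt_sq hR.le
  set T := e ⁻¹' S with hT
  have hTmeas : MeasurableSet T := hemb.measurable hSmeas
  have hTsub : T ⊆ ball c₀ rr := by
    intro y hy
    have h1 : dist (e y) x₀ < R := hy.1
    have h2 := dist_snocE_sq m y x₀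
    rw [← he] at h2
    have h3 : dist y c₀ ^ 2 < R^2 - a^2 := by
      nlinarith [dist_nonneg (x := e y) (y := x₀)]
    exact mem_ball.mpr ((Real.lt_sqrt dist_nonneg).mpr h3)
  have hptwise : ∀ y ∈ T, Real.exp (p * (dist (e y) x₀ - R))
      ≤ Real.exp (p * ((dist y c₀)^2 - rr^2) / (2*R)) := by
    intro y hy
    have h1 : dist (e y) x₀ < R := hy.1
    have h2 := dist_snocE_sq m y x₀
    rw [← he] at h2
    have ha2 : a^2 ≤ R^2 := by
      nlinarith [dist_nonneg (x := e y) (y := x₀), sq_nonneg (dist y c₀)]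
    have hrr2 : rr^2 = R^2 - a^2 := Real.sq_sqrt (by linarith)
    apply Real.exp_le_exp.mpr
    have key : dist (e y) x₀ - R ≤ ((dist (e y) x₀)^2 - R^2) / (2*R) := by
      rw [le_div_iff₀ (by linarith : (0:ℝ) < 2*R)]
      nlinarith [sq_nonneg (dist (e y) x₀ - R)]
    calc p * (dist (e y) x₀ - R) ≤ p * (((dist (e y) x₀)^2 - R^2) / (2*R)) :=
        mul_le_mul_of_nonneg_left key hp0.le
      _ = p * ((dist y c₀)^2 - rr^2) / (2*R) := by rw [h2, hrr2]; ring
  have hexp_cont : Continuous fun y : EuclideanSpace ℝ (Fin m) =>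
      Real.exp (p * (dist (e y) x₀ - R)) :=
    Real.continuous_exp.comp (continuous_const.mul
      (((hiso.continuous).dist continuous_const).sub continuous_const))
  have hg_cont : Continuous fun y : EuclideanSpace ℝ (Fin m) =>
      Real.exp (p * ((dist y c₀)^2 - rr^2) / (2*R)) := by fun_prop
  have hints : IntegrableOn (fun y => Real.exp (p * (dist (e y) x₀ - R))) T volume :=
    ((hexp_cont.continuousOn).integrableOn_compact (isCompact_closedBall c₀ rr)).mono_set
      (hTsub.trans ball_subset_closedBall)
  have hintg_ball : IntegrableOn
      (fun y => Real.exp (p * ((dist y c₀)^2 - rr^2) / (2*R))) (ball c₀ rr) volume :=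
    ((hg_cont.continuousOn).integrableOn_compact (isCompact_closedBall c₀ rr)).mono_set
      ball_subset_closedBall
  have hintg : IntegrableOn
      (fun y => Real.exp (p * ((dist y c₀)^2 - rr^2) / (2*R))) T volume :=
    hintg_ball.mono_set hTsub
  have step1 : ∫ y in T, Real.exp (p * (dist (e y) x₀ - R)) ∂(μH[(m:ℕ)])
      ≤ c.toReal * ∫ y in T, Real.exp (p * (dist (e y) x₀ - R)) := by
    calc ∫ y in T, Real.exp (p * (dist (e y) x₀ - R)) ∂(μH[(m:ℕ)])
        ≤ ∫ y in T, Real.exp (p * (dist (e y) x₀ - R)) ∂(c • volume) := by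
          apply integral_mono_measure (Measure.restrict_mono (subset_refl T) hc)
            (Filter.Eventually.of_forall fun y => (Real.exp_pos _).le)
          rw [Measure.restrict_smul]
          exact hints.smul_measure hc_top
      _ = c.toReal * ∫ y in T, Real.exp (p * (dist (e y) x₀ - R)) := by
          rw [Measure.restrict_smul, integral_smul_measure, smul_eq_mul]
  have step2 : ∫ y in T, Real.exp (p * (dist (e y) x₀ - R))
      ≤ ∫ y in T, Real.exp (p * ((dist y c₀)^2 - rr^2) / (2*R)) :=
    setIntegral_mono_on hints hintg hTmeas hptwise
  have step3 : ∫ y in T, Real.exp (p * ((dist y c₀)^2 - rr^2) / (2*R))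
      ≤ ∫ y in ball c₀ rr, Real.exp (p * ((dist y c₀)^2 - rr^2) / (2*R)) :=
    setIntegral_mono_set hintg_ball
      (Filter.Eventually.of_forall fun y => (Real.exp_pos _).le)
      (HasSubset.Subset.eventuallyLE hTsub)
  have step4 := radial m hm p R rr hp0 hR hrr0 hrrR c₀
  have hcnn : (0:ℝ) ≤ c.toReal := ENNReal.toReal_nonneg
  have hfinal : c.toReal * ((m * V) * (R^(m-2) * (R/p)))
      = (c.toReal * ((m * V) * (1 / p))) * R ^ (m - 1) := by
    have hpow : R^(m-2) * R = R^(m-1) := by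
      rw [← pow_succ]
      congr 1
      omega
    rw [← hpow]
    field_simp
  calc ∫ y in T, Real.exp (p * (dist (e y) x₀ - R)) ∂(μH[(m:ℕ)])
      ≤ c.toReal * ∫ y in T, Real.exp (p * (dist (e y) x₀ - R)) := step1
    _ ≤ c.toReal * ((m * V) * (R^(m-2) * (R/p))) := by
        apply mul_le_mul_of_nonneg_left _ hcnn
        exact le_trans step2 (le_trans step3 step4)
    _ = (c.toReal * ((m * V) * (1 / p))) * R ^ (m - 1) := hfinal
    _ ≤ (c.toReal * ((m * V) * (1 / p)) + 1) * R ^ (m - 1) := by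
        apply mul_le_mul_of_nonneg_right (le_add_of_nonneg_right zero_le_one)
        positivity
end
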